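/- arXiv:2305.05492 — 7 statements merged into one kernel-verified Lean document; each statement's English description precedes it below -/
import Mathlib

section
/- Let (X,ϱ) be a complete and separable metric space, let η be a nonnegative finite Borel measure with finite first moment, c > 0, and q, q' ∈ X two distinct points with [q,q'] = {q,q'}. Set μ := η + c·δ_q and ν := η + c·δ_{q'}. Then there is exactly one optimal coupling of μ and ν, namely Π* := c·δ_{(q,q')} + (Id×Id)_# η, i.e., Π* is the unique coupling Π of μ and ν satisfying ∬_{X×X} ϱ(x,y) dΠ(x,y) = d₁(μ,ν); moreover d₁(μ,ν) = c·ϱ(q,q'). -/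
open MeasureTheory Set
open scoped ENNReal

/-- A measure on `X × X` concentrated on the diagonal is the push-forward of its
first marginal under the diagonal map. -/
theorem diag_rep_of_null_compl {X : Type*} [MeasurableSpace X]
    (hD : MeasurableSet (Set.diagonal X)) (ρ : Measure (X × X))
    (h : ρ (Set.diagonal X)ᶜ = 0) :
    ρ = (ρ.map Prod.fst).map (fun x => (x, x)) := by
  have hdiagmap : Measurable fun x : X => (x, x) := measurable_id.prodMk measurable_id
  ext A hA
  rw [Measure.map_apply hdiagmap hA, Measure.map_apply measurable_fst (hdiagmap hA)]
  have key : ∀ B : Set (X × X), ρ B = ρ (B ∩ Set.diagonal X) := by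
    intro B
    rw [← measure_inter_add_diff B hD,
      measure_mono_null (Set.diff_subset_compl B (Set.diagonal X)) h, add_zero]
  rw [key A, key (Prod.fst ⁻¹' ((fun x : X => (x, x)) ⁻¹' A))]
  congr 1
  ext ⟨x, y⟩
  simp only [Set.mem_inter_iff, Set.mem_diagonal_iff, Set.mem_preimage]
  constructor
  · rintro ⟨hxy, rfl⟩; exact ⟨hxy, rfl⟩
  · rintro ⟨hxy, rfl⟩; exact ⟨hxy, rfl⟩

noncomputable section


/-- A coupling of `μ` and `ν` is a measure on `X × X` with marginals `μ` and `ν`. -/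
def IsCoupling {X : Type*} [MeasurableSpace X] (μ ν : Measure X)
    (π : Measure (X × X)) : Prop :=
  π.map Prod.fst = μ ∧ π.map Prod.snd = ν

/-- The 1-Wasserstein distance: infimum over couplings of the integral of the distance. -/
noncomputable def W1 {X : Type*} [MeasurableSpace X] [PseudoEMetricSpace X]
    (μ ν : Measure X) : ℝ≥0∞ :=
  ⨅ (π : Measure (X × X)) (_ : IsCoupling μ ν π), ∫⁻ p, edist p.1 p.2 ∂π

/-- `μ` has a finite first moment. -/
def HasFiniteFirstMoment {X : Type*} [MeasurableSpace X] [PseudoEMetricSpace X]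
    (μ : Measure X) : Prop :=
  ∃ x₀ : X, ∫⁻ x, edist x x₀ ∂μ ≠ ⊤

/-- Membership in the 1-Wasserstein space: a Borel probability measure with finite
first moment. -/
def MemW1 {X : Type*} [MeasurableSpace X] [PseudoEMetricSpace X]
    (μ : Measure X) : Prop :=
  IsProbabilityMeasure μ ∧ HasFiniteFirstMoment μ

/-- A unit-speed geodesic in the 1-Wasserstein space, defined on `[a,b]`. -/
def IsUnitSpeedGeodesicOn {X : Type*} [MeasurableSpace X] [PseudoEMetricSpace X]
    (γ : ℝ → Measure X) (a b : ℝ) : Prop :=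
  (∀ t ∈ Icc a b, MemW1 (γ t)) ∧
  ∀ s ∈ Icc a b, ∀ t ∈ Icc a b, W1 (γ s) (γ t) = ENNReal.ofReal |s - t|

/-- The metric segment `[q,q']`. -/
def metricSegment {X : Type*} [PseudoMetricSpace X] (q q' : X) : Set X :=
  {r | dist q r + dist r q' = dist q q'}

/-- The metric `λ`-ratio set `M_λ(μ,ν)`. -/
def ratioSet {X : Type*} [MeasurableSpace X] [PseudoEMetricSpace X]
    (μ ν : Measure X) (lam : ℝ) : Set (Measure X) :=
  {ξ | MemW1 ξ ∧ W1 μ ξ = ENNReal.ofReal lam * W1 μ ν ∧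
       W1 ξ ν = ENNReal.ofReal (1 - lam) * W1 μ ν}

/-- The linear interpolation `t ↦ (1 - t/T) μ + (t/T) ν`. -/
noncomputable def linInterp {X : Type*} [MeasurableSpace X]
    (μ ν : Measure X) (T t : ℝ) : Measure X :=
  ENNReal.ofReal (1 - t / T) • μ + ENNReal.ofReal (t / T) • ν

/-- The relation `q ∼ q'`: any point saturating one of the three triangle
equalities must be `q` or `q'`. -/
def PointRel {X : Type*} [PseudoMetricSpace X] (q q' : X) : Prop :=
  ∀ r : X,
    (dist q q' = dist q r + dist r q' → r = q ∨ r = q') ∧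
    (dist r q = dist r q' + dist q' q → r = q ∨ r = q') ∧
    (dist q' r = dist q' q + dist q r → r = q ∨ r = q')


theorem stmt3 {X : Type*} [MetricSpace X] [CompleteSpace X]
    [TopologicalSpace.SeparableSpace X] [MeasurableSpace X] [BorelSpace X]
    (η : Measure X) [IsFiniteMeasure η] (hη : HasFiniteFirstMoment η)
    (c : ℝ) (hc : 0 < c) (q q' : X) (hne : q ≠ q')
    (hseg : metricSegment q q' = {q, q'})
    (μ ν : Measure X)
    (hμdef : μ = η + ENNReal.ofReal c • Measure.dirac q)
    (hνdef : ν = η + ENNReal.ofReal c • Measure.dirac q') :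
    W1 μ ν = ENNReal.ofReal c * edist q q' ∧
    IsCoupling μ ν
      (ENNReal.ofReal c • Measure.dirac (q, q') + η.map (fun x => (x, x))) ∧
    (∫⁻ p, edist p.1 p.2
        ∂(ENNReal.ofReal c • Measure.dirac (q, q') + η.map (fun x => (x, x))))
      = W1 μ ν ∧
    ∀ π : Measure (X × X), IsCoupling μ ν π →
      (∫⁻ p, edist p.1 p.2 ∂π) = W1 μ ν →
      π = ENNReal.ofReal c • Measure.dirac (q, q') + η.map (fun x => (x, x)) := by
  haveI hSC : SecondCountableTopology X := UniformSpace.secondCountable_of_separable X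
  haveI hSing : MeasurableSingletonClass X :=
    ⟨fun x => (isClosed_singleton (x := x)).measurableSet⟩
  set C := ENNReal.ofReal c with hCdef
  set d0 := edist q q' with hd0def
  have hC0 : C ≠ 0 := by simpa [hCdef] using (ENNReal.ofReal_pos.2 hc).ne'
  have hCt : C ≠ ⊤ := ENNReal.ofReal_ne_top
  have hd0ne : d0 ≠ 0 := by simpa [hd0def] using (edist_pos.2 hne).ne'
  have hd0t : d0 ≠ ⊤ := edist_ne_top q q'
  have hdiagmap : Measurable fun x : X => (x, x) := measurable_id.prodMk measurable_id
  have hed : Measurable fun p : X × X => edist p.1 p.2 := measurable_edist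
  have hedq' : Measurable fun x : X => edist x q' := measurable_id.edist measurable_const
  have hedq : Measurable fun x : X => edist x q := measurable_id.edist measurable_const
  -- finite first moments against η
  have hmom : ∀ z : X, ∫⁻ x, edist x z ∂η ≠ ⊤ := by
    obtain ⟨x₀, hx₀⟩ := hη
    intro z
    have hle : ∫⁻ x, edist x z ∂η ≤ ∫⁻ x, (edist x x₀ + edist x₀ z) ∂η :=
      lintegral_mono fun x => edist_triangle _ _ _
    rw [lintegral_add_right _ measurable_const, lintegral_const] at hle
    exact ne_top_of_le_ne_top
      (ENNReal.add_ne_top.2 ⟨hx₀, ENNReal.mul_ne_top (edist_ne_top _ _) (measure_ne_top η _)⟩) hle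
  set F := ∫⁻ x, edist x q' ∂η with hFdef
  set G := ∫⁻ x, edist x q ∂η with hGdef
  have hF : F ≠ ⊤ := hmom q'
  have hG : G ≠ ⊤ := hmom q
  -- integrals against μ and ν
  have hμint : ∀ f : X → ℝ≥0∞, Measurable f → ∫⁻ x, f x ∂μ = ∫⁻ x, f x ∂η + C * f q := by
    intro f hf
    rw [hμdef, lintegral_add_measure, lintegral_smul_measure, lintegral_dirac' _ hf, smul_eq_mul]
  have hνint : ∀ f : X → ℝ≥0∞, Measurable f → ∫⁻ x, f x ∂ν = ∫⁻ x, f x ∂η + C * f q' := by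
    intro f hf
    rw [hνdef, lintegral_add_measure, lintegral_smul_measure, lintegral_dirac' _ hf, smul_eq_mul]
  -- marginal integrals for couplings
  have hfst : ∀ π : Measure (X × X), IsCoupling μ ν π → ∀ f : X → ℝ≥0∞, Measurable f →
      ∫⁻ p, f p.1 ∂π = ∫⁻ x, f x ∂μ := by
    intro π hπ f hf
    rw [← hπ.1, lintegral_map hf measurable_fst]
  have hsnd : ∀ π : Measure (X × X), IsCoupling μ ν π → ∀ f : X → ℝ≥0∞, Measurable f →
      ∫⁻ p, f p.2 ∂π = ∫⁻ x, f x ∂ν := by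
    intro π hπ f hf
    rw [← hπ.2, lintegral_map hf measurable_snd]
  -- the candidate optimal coupling
  set P0 : Measure (X × X) :=
    C • Measure.dirac (q, q') + η.map (fun x => (x, x)) with hP0def
  -- P0 is a coupling
  have hcpl₀ : IsCoupling μ ν P0 := by
    constructor
    · rw [hP0def, Measure.map_add _ _ measurable_fst, Measure.map_smul,
        Measure.map_dirac' measurable_fst,
        Measure.map_map measurable_fst hdiagmap]
      simp only [Function.comp_def]
      rw [Measure.map_id', hμdef, add_comm]
    · rw [hP0def, Measure.map_add _ _ measurable_snd, Measure.map_smul,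
        Measure.map_dirac' measurable_snd,
        Measure.map_map measurable_snd hdiagmap]
      simp only [Function.comp_def]
      rw [Measure.map_id', hνdef, add_comm]
  -- cost of P0
  have hcost₀ : ∫⁻ p, edist p.1 p.2 ∂P0 = C * d0 := by
    rw [hP0def, lintegral_add_measure, lintegral_smul_measure, lintegral_dirac' _ hed,
      lintegral_map hed hdiagmap]
    simp [edist_self, hd0def]
  -- lower bound for any coupling
  have hlb : ∀ π : Measure (X × X), IsCoupling μ ν π →
      C * d0 ≤ ∫⁻ p, edist p.1 p.2 ∂π := by
    intro π hπ
    have hm1 : ∫⁻ p, edist p.1 q' ∂π = F + C * d0 := by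
      rw [hfst π hπ _ hedq', hμint _ hedq']
    have hm2 : ∫⁻ p, edist p.2 q' ∂π = F := by
      rw [hsnd π hπ _ hedq', hνint _ hedq']
      simp [edist_self, hFdef]
    have hkey : ∫⁻ p, (edist p.1 p.2 + edist p.2 q') ∂π
        = ∫⁻ p, edist p.1 p.2 ∂π + F := by
      rw [lintegral_add_left hed, hm2]
    have hmono : F + C * d0 ≤ ∫⁻ p, edist p.1 p.2 ∂π + F := by
      rw [← hm1, ← hkey]
      exact lintegral_mono fun p => edist_triangle _ _ _
    rw [add_comm (∫⁻ p, edist p.1 p.2 ∂π) F] at hmono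
    exact (ENNReal.add_le_add_iff_left hF).1 hmono
  -- the value of W1
  have hW1 : W1 μ ν = C * d0 := by
    apply le_antisymm
    · exact (iInf₂_le P0 hcpl₀).trans_eq hcost₀
    · exact le_iInf fun π => le_iInf fun hπ => hlb π hπ
  refine ⟨hW1, hcpl₀, hcost₀.trans hW1.symm, ?_⟩
  -- uniqueness
  intro π hπ hπcost
  rw [hW1] at hπcost
  have hCd0t : C * d0 ≠ ⊤ := ENNReal.mul_ne_top hCt hd0t
  haveI hSing2 : MeasurableSingletonClass (X × X) :=
    ⟨fun p => by
      rw [show ({p} : Set (X × X)) = {p.1} ×ˢ {p.2} by simp]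
      exact (measurableSet_singleton _).prod (measurableSet_singleton _)⟩
  -- complementary slackness
  have E1 : (fun p : X × X => edist p.1 q') =ᵐ[π]
      (fun p => edist p.1 p.2 + edist p.2 q') := by
    apply ae_eq_of_ae_le_of_lintegral_le
    · exact Filter.Eventually.of_forall fun p => edist_triangle _ _ _
    · rw [hfst π hπ _ hedq', hμint _ hedq']
      exact ENNReal.add_ne_top.2 ⟨hF, hCd0t⟩
    · exact (hed.add (hedq'.comp measurable_snd)).aemeasurable
    · rw [lintegral_add_left hed, hπcost, hsnd π hπ _ hedq', hνint _ hedq',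
        hfst π hπ _ hedq', hμint _ hedq']
      simp only [edist_self, mul_zero, add_zero]
      exact le_of_eq (add_comm _ _)
  have E2 : (fun p : X × X => edist p.2 q) =ᵐ[π]
      (fun p => edist p.1 p.2 + edist p.1 q) := by
    apply ae_eq_of_ae_le_of_lintegral_le
    · refine Filter.Eventually.of_forall fun p => ?_
      calc edist p.2 q ≤ edist p.2 p.1 + edist p.1 q := edist_triangle _ _ _
      _ = edist p.1 p.2 + edist p.1 q := by rw [edist_comm p.2 p.1]
    · rw [hsnd π hπ _ hedq, hνint _ hedq]
      exact ENNReal.add_ne_top.2 ⟨hG, ENNReal.mul_ne_top hCt (edist_ne_top _ _)⟩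
    · exact (hed.add (hedq.comp measurable_fst)).aemeasurable
    · rw [lintegral_add_left hed, hπcost, hfst π hπ _ hedq, hμint _ hedq,
        hsnd π hπ _ hedq, hνint _ hedq]
      simp only [edist_self, mul_zero, add_zero]
      rw [edist_comm q' q]
      exact le_of_eq (add_comm _ _)
  have E3 : ∀ᵐ p ∂π, edist p.1 q + edist p.1 q' = edist p.2 q + edist p.2 q' := by
    filter_upwards [E1, E2] with p h1 h2
    rw [h1, h2]
    ring
  -- characterization of the two-point set via the potential
  have hphi : ∀ x : X, (edist x q + edist x q' = d0 ↔ (x = q ∨ x = q')) := by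
    intro x
    constructor
    · intro h
      have hd : dist q x + dist x q' = dist q q' := by
        have h' := congrArg ENNReal.toReal h
        rw [ENNReal.toReal_add (edist_ne_top _ _) (edist_ne_top _ _)] at h'
        rw [hd0def, ← dist_edist] at h'
        simp only [← dist_edist] at h'
        rw [dist_comm q x]
        linarith [h']
      have hx : x ∈ metricSegment q q' := hd
      rw [hseg] at hx
      simpa using hx
    · rintro (rfl | rfl) <;> simp [edist_self, hd0def, edist_comm]
  have hPae : ∀ᵐ p ∂π, ((p.1 = q ∨ p.1 = q') ↔ (p.2 = q ∨ p.2 = q')) := by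
    filter_upwards [E3] with p h
    rw [← hphi p.1, ← hphi p.2, h]
  have hcross : π {p : X × X | ¬((p.1 = q ∨ p.1 = q') ↔ (p.2 = q ∨ p.2 = q'))} = 0 :=
    ae_iff.1 hPae
  -- finiteness of π
  have hμuniv : μ Set.univ ≠ ⊤ := by
    rw [hμdef, Measure.add_apply, Measure.smul_apply, smul_eq_mul]
    exact ENNReal.add_ne_top.2 ⟨measure_ne_top η _, ENNReal.mul_ne_top hCt (by simp)⟩
  have hπuniv : π Set.univ = μ Set.univ := by
    rw [← hπ.1, Measure.map_apply measurable_fst MeasurableSet.univ, Set.preimage_univ]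
  have hπfin : ∀ s : Set (X × X), π s ≠ ⊤ := fun s =>
    (((measure_mono (Set.subset_univ s)).trans_eq hπuniv).trans_lt
      (lt_top_iff_ne_top.2 hμuniv)).ne
  -- atom computations
  have hQQmeas : MeasurableSet ({q, q'} : Set X) := (measurableSet_singleton q').insert q
  have key_fst : ∀ z : X, (z = q ∨ z = q') → μ {z} = π {(z, q)} + π {(z, q')} := by
    intro z hz
    have h0 : π ((Prod.fst ⁻¹' {z}) \ (Prod.snd ⁻¹' ({q, q'} : Set X))) = 0 := by
      refine measure_mono_null ?_ hcross
      rintro ⟨x, y⟩ ⟨hx, hy⟩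
      simp only [Set.mem_preimage, Set.mem_singleton_iff] at hx
      simp only [Set.mem_preimage, Set.mem_insert_iff, Set.mem_singleton_iff] at hy
      simp only [Set.mem_setOf_eq]
      intro hiff
      exact hy (hiff.1 (by rw [hx]; exact hz))
    have hset : (Prod.fst ⁻¹' {z}) ∩ (Prod.snd ⁻¹' ({q, q'} : Set X))
        = {(z, q)} ∪ {(z, q')} := by
      ext ⟨x, y⟩
      simp only [Set.mem_inter_iff, Set.mem_preimage, Set.mem_singleton_iff,
        Set.mem_insert_iff, Set.mem_union, Prod.ext_iff]
      tauto
    have hsplit := measure_inter_add_diff (μ := π) (Prod.fst ⁻¹' {z})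
      (measurable_snd hQQmeas)
    rw [h0, add_zero, hset] at hsplit
    rw [← hπ.1, Measure.map_apply measurable_fst (measurableSet_singleton z), ← hsplit,
      measure_union (Set.disjoint_singleton.2 (by simp [hne])) (measurableSet_singleton _)]
  have key_snd : ∀ z : X, (z = q ∨ z = q') → ν {z} = π {(q, z)} + π {(q', z)} := by
    intro z hz
    have h0 : π ((Prod.snd ⁻¹' {z}) \ (Prod.fst ⁻¹' ({q, q'} : Set X))) = 0 := by
      refine measure_mono_null ?_ hcross
      rintro ⟨x, y⟩ ⟨hy, hx⟩
      simp only [Set.mem_preimage, Set.mem_singleton_iff] at hy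
      simp only [Set.mem_preimage, Set.mem_insert_iff, Set.mem_singleton_iff] at hx
      simp only [Set.mem_setOf_eq]
      intro hiff
      exact hx (hiff.2 (by rw [hy]; exact hz))
    have hset : (Prod.snd ⁻¹' {z}) ∩ (Prod.fst ⁻¹' ({q, q'} : Set X))
        = {(q, z)} ∪ {(q', z)} := by
      ext ⟨x, y⟩
      simp only [Set.mem_inter_iff, Set.mem_preimage, Set.mem_singleton_iff,
        Set.mem_insert_iff, Set.mem_union, Prod.ext_iff]
      tauto
    have hsplit := measure_inter_add_diff (μ := π) (Prod.snd ⁻¹' {z})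
      (measurable_fst hQQmeas)
    rw [h0, add_zero, hset] at hsplit
    rw [← hπ.2, Measure.map_apply measurable_snd (measurableSet_singleton z), ← hsplit,
      measure_union (Set.disjoint_singleton.2 (by simp [hne])) (measurableSet_singleton _)]
  have hμq : μ {q} = η {q} + C := by
    simp [hμdef, Measure.dirac_apply]
  have hνq : ν {q} = η {q} := by
    simp [hνdef, Measure.dirac_apply, (Ne.symm hne)]
  have eq1 : π {((q, q) : X × X)} + π {((q, q') : X × X)} = η {q} + C := by
    rw [← key_fst q (Or.inl rfl), hμq]
  have eq3 : π {((q, q) : X × X)} + π {((q', q) : X × X)} = η {q} := by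
    rw [← key_snd q (Or.inl rfl), hνq]
  have hm : π {((q, q') : X × X)} = π {((q', q) : X × X)} + C := by
    have h := eq1
    rw [← eq3, add_assoc] at h
    exact (ENNReal.add_right_inj (hπfin _)).1 h
  -- cost decomposition over the two off-diagonal atoms
  set T : Set (X × X) := {(q, q')} ∪ {(q', q)} with hTdef
  have hTmeas : MeasurableSet T := (measurableSet_singleton _).union (measurableSet_singleton _)
  have hcostT : ∫⁻ p in T, edist p.1 p.2 ∂π
      = π {((q, q') : X × X)} * d0 + π {((q', q) : X × X)} * d0 := by
    rw [hTdef, Measure.restrict_union (Set.disjoint_singleton.2 (by simp [hne, Prod.ext_iff]))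
        (measurableSet_singleton _),
      lintegral_add_measure, Measure.restrict_singleton, Measure.restrict_singleton,
      lintegral_smul_measure, lintegral_smul_measure, lintegral_dirac, lintegral_dirac]
    rw [edist_comm q' q]; rfl
  have hsplit := lintegral_add_compl (fun p : X × X => edist p.1 p.2) hTmeas (μ := π)
  rw [hcostT, hπcost] at hsplit
  have hzero : (π {((q', q) : X × X)} * d0 + π {((q', q) : X × X)} * d0)
      + ∫⁻ p in Tᶜ, edist p.1 p.2 ∂π = 0 := by
    have h2 : C * d0 + ((π {((q', q) : X × X)} * d0 + π {((q', q) : X × X)} * d0)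
        + ∫⁻ p in Tᶜ, edist p.1 p.2 ∂π) = C * d0 + 0 := by
      rw [add_zero]
      calc C * d0 + ((π {((q', q) : X × X)} * d0 + π {((q', q) : X × X)} * d0)
          + ∫⁻ p in Tᶜ, edist p.1 p.2 ∂π)
          = (π {((q', q) : X × X)} + C) * d0 + π {((q', q) : X × X)} * d0
            + ∫⁻ p in Tᶜ, edist p.1 p.2 ∂π := by ring
        _ = π {((q, q') : X × X)} * d0 + π {((q', q) : X × X)} * d0
            + ∫⁻ p in Tᶜ, edist p.1 p.2 ∂π := by rw [← hm]
        _ = C * d0 := hsplit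
    exact (ENNReal.add_right_inj hCd0t).1 h2
  have hm21 : π {((q', q) : X × X)} = 0 := by
    have h1 := (add_eq_zero.1 hzero).1
    have h2 := (add_eq_zero.1 h1).1
    rcases mul_eq_zero.1 h2 with h | h
    · exact h
    · exact absurd h hd0ne
  have hR : ∫⁻ p in Tᶜ, edist p.1 p.2 ∂π = 0 := (add_eq_zero.1 hzero).2
  have hm12 : π {((q, q') : X × X)} = C := by rw [hm, hm21, zero_add]
  -- off-diagonal outside the atom (q,q') is null
  set D := Set.diagonal X with hDdef
  have hDmeas : MeasurableSet D := isClosed_diagonal.measurableSet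
  have hoff : π (Dᶜ ∩ Tᶜ) = 0 := by
    have hae0 := (lintegral_eq_zero_iff hed).1 hR
    rw [Filter.EventuallyEq, ae_iff] at hae0
    simp only [Pi.zero_apply] at hae0
    rw [Measure.restrict_apply' hTmeas.compl] at hae0
    refine measure_mono_null ?_ hae0
    rintro p ⟨h1, h2⟩
    refine ⟨?_, h2⟩
    simp only [Set.mem_setOf_eq, edist_eq_zero]
    exact fun h => h1 (by rwa [hDdef, Set.mem_diagonal_iff])
  have hN : π (Dᶜ \ ({((q, q') : X × X)} : Set (X × X))) = 0 := by
    refine measure_mono_null ?_ (measure_union_null hoff hm21)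
    rintro p ⟨hpD, hpq⟩
    by_cases hpT : p ∈ T
    · right
      rcases hpT with h | h
      · exact absurd h hpq
      · exact h
    · left
      exact ⟨hpD, hpT⟩
  -- decompose π
  have hdec : π = C • Measure.dirac (q, q') + π.restrict D := by
    have h1 : π.restrict {((q, q') : X × X)} = C • Measure.dirac (q, q') := by
      rw [Measure.restrict_singleton, hm12]
    have hae : (({((q, q') : X × X)} : Set (X × X))ᶜ : Set (X × X)) =ᵐ[π] D := by
      rw [ae_eq_set]
      constructor
      · refine measure_mono_null ?_ hN
        rintro p ⟨h1', h2'⟩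
        exact ⟨h2', h1'⟩
      · have hempty : D \ (({((q, q') : X × X)} : Set (X × X))ᶜ) = ∅ := by
          ext p
          simp only [Set.mem_diff, Set.mem_compl_iff, not_not, Set.mem_empty_iff_false,
            iff_false, not_and, Set.mem_singleton_iff]
          intro hp1 hp2
          rw [hDdef, Set.mem_diagonal_iff, hp2] at hp1
          exact hne hp1
        rw [hempty]
        exact measure_empty
    calc π = π.restrict {((q, q') : X × X)}
        + π.restrict (({((q, q') : X × X)} : Set (X × X))ᶜ) :=
          (Measure.restrict_add_restrict_compl (measurableSet_singleton _)).symm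
    _ = C • Measure.dirac (q, q') + π.restrict D := by
        rw [h1, Measure.restrict_congr_set hae]
  have hρD : (π.restrict D) Dᶜ = 0 := by
    rw [Measure.restrict_apply' hDmeas]
    simp
  have hrep : π.restrict D = ((π.restrict D).map Prod.fst).map (fun x => (x, x)) :=
    diag_rep_of_null_compl hDmeas _ hρD
  have hmη : (π.restrict D).map Prod.fst = η := by
    have hμeq : μ = C • Measure.dirac q + (π.restrict D).map Prod.fst := by
      calc μ = π.map Prod.fst := hπ.1.symm
      _ = (C • Measure.dirac (q, q') + π.restrict D).map Prod.fst := by rw [← hdec]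
      _ = C • Measure.dirac q + (π.restrict D).map Prod.fst := by
          rw [Measure.map_add _ _ measurable_fst, Measure.map_smul,
            Measure.map_dirac' measurable_fst]
    ext A hA
    have h := congrArg (fun m : Measure X => m A) (hμdef.symm.trans hμeq)
    simp only [Measure.add_apply, Measure.smul_apply, smul_eq_mul] at h
    rw [add_comm] at h
    refine ((ENNReal.add_right_inj ?_).1 h).symm
    refine ENNReal.mul_ne_top hCt ?_
    have hle : Measure.dirac q A ≤ 1 := by
      simpa using measure_mono (μ := Measure.dirac q) (Set.subset_univ A)
    exact ne_top_of_le_ne_top ENNReal.one_ne_top hle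
  rw [hdec, hrep, hmη]
end
end

section
/- Let (X,ϱ) be a complete and separable metric space, let η be a nonnegative finite Borel measure with finite first moment, c > 0, and q, q' ∈ X distinct, with μ := η + c·δ_q and ν := η + c·δ_{q'} probability measures and T := d₁(μ,ν) > 0. Suppose there exists z ∈ X with z ∉ {q,q'} and ϱ(q,z) + ϱ(z,q') = ϱ(q,q'). Set T' := d₁(μ, η + c·δ_z). Then the broken-line curve γ̃:[0,T] → W₁(X) given by γ̃(t) = η + (1 − t/T')·c·δ_q + (t/T')·c·δ_z for t ∈ [0,T'] and γ̃(t) = η + (1 − (t−T')/(T−T'))·c·δ_z + ((t−T')/(T−T'))·c·δ_{q'} for t ∈ (T',T] is a unit-speed geodesic from μ to ν passing through η + c·δ_z; in particular it differs from the linear interpolation t ↦ (1 − t/T)μ + (t/T)ν, so there exist at least two distinct unit-speed geodesics from μ to ν. -/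
open MeasureTheory Set
open scoped ENNReal

noncomputable section

open Classical in
/-- The broken-line curve through `η + c δ_z`: first transport the atom from `q`
to `z` during `[0,T']`, then from `z` to `q'` during `[T',T]`. -/
noncomputable def brokenGeodesic {X : Type*} [MeasurableSpace X] (η : Measure X)
    (c T T' : ℝ) (q z q' : X) : ℝ → Measure X := fun t =>
  if t ≤ T' then
    η + ENNReal.ofReal ((1 - t / T') * c) • Measure.dirac q
      + ENNReal.ofReal ((t / T') * c) • Measure.dirac z
  else
    η + ENNReal.ofReal ((1 - (t - T') / (T - T')) * c) • Measure.dirac z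
      + ENNReal.ofReal (((t - T') / (T - T')) * c) • Measure.dirac q'

section Helpers
set_option linter.unusedSectionVars false
set_option maxHeartbeats 1000000
variable {X : Type*} [MetricSpace X] [TopologicalSpace.SeparableSpace X] [MeasurableSpace X] [BorelSpace X]

lemma W1_le_of_coupling {μ ν : Measure X} {π : Measure (X × X)} (h : IsCoupling μ ν π) :
    W1 μ ν ≤ ∫⁻ p, edist p.1 p.2 ∂π := iInf₂_le π h

lemma le_W1_of {μ ν : Measure X} (x₀ : X) (r : ℝ≥0∞)
    (hfin : ∫⁻ x, edist x x₀ ∂ν ≠ ⊤)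
    (key : r + ∫⁻ x, edist x x₀ ∂ν ≤ ∫⁻ x, edist x x₀ ∂μ) :
    r ≤ W1 μ ν := by
  refine le_iInf₂ fun π hπ => ?_
  have h1 : ∫⁻ x, edist x x₀ ∂μ ≤ ∫⁻ x, edist x x₀ ∂ν + ∫⁻ p, edist p.1 p.2 ∂π := by
    rw [← hπ.1, ← hπ.2,
      lintegral_map (by fun_prop) measurable_fst,
      lintegral_map (by fun_prop) measurable_snd,
      ← lintegral_add_left (by fun_prop)]
    refine lintegral_mono fun p => ?_
    calc edist p.1 x₀ ≤ edist p.1 p.2 + edist p.2 x₀ := edist_triangle _ _ _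
    _ = edist p.2 x₀ + edist p.1 p.2 := add_comm _ _
  have h2 := key.trans h1
  rw [add_comm r _] at h2
  exact (ENNReal.add_le_add_iff_left hfin).mp h2

lemma isCoupling_diag_atoms (κ : Measure X) (w₁ w₂ : ℝ≥0∞) (p₁ p₂ : X × X) :
    IsCoupling (κ + w₁ • Measure.dirac p₁.1 + w₂ • Measure.dirac p₂.1)
      (κ + w₁ • Measure.dirac p₁.2 + w₂ • Measure.dirac p₂.2)
      (κ.map (fun x => (x, x)) + w₁ • Measure.dirac p₁ + w₂ • Measure.dirac p₂) := by
  have hm : Measurable fun x : X => (x, x) := measurable_id.prod measurable_id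
  constructor
  · rw [Measure.map_add _ _ measurable_fst, Measure.map_add _ _ measurable_fst,
      Measure.map_smul, Measure.map_smul, Measure.map_dirac' measurable_fst,
      Measure.map_dirac' measurable_fst, Measure.map_map measurable_fst hm]
    have : (Prod.fst ∘ fun x : X => (x, x)) = id := rfl
    rw [this, Measure.map_id]
  · rw [Measure.map_add _ _ measurable_snd, Measure.map_add _ _ measurable_snd,
      Measure.map_smul, Measure.map_smul, Measure.map_dirac' measurable_snd,
      Measure.map_dirac' measurable_snd, Measure.map_map measurable_snd hm]
    have : (Prod.snd ∘ fun x : X => (x, x)) = id := rfl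
    rw [this, Measure.map_id]

lemma cost_diag_atoms (κ : Measure X) (w₁ w₂ : ℝ≥0∞) (p₁ p₂ : X × X) :
    ∫⁻ p, edist p.1 p.2 ∂(κ.map (fun x => (x, x)) + w₁ • Measure.dirac p₁ + w₂ • Measure.dirac p₂)
      = w₁ * edist p₁.1 p₁.2 + w₂ * edist p₂.1 p₂.2 := by
  have : SecondCountableTopology X := UniformSpace.secondCountable_of_separable X
  have hm : Measurable fun x : X => (x, x) := measurable_id.prod measurable_id
  have he : Measurable fun p : X × X => edist p.1 p.2 := continuous_edist.measurable
  rw [lintegral_add_measure, lintegral_add_measure, lintegral_smul_measure,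
    lintegral_smul_measure, lintegral_dirac' _ he, lintegral_dirac' _ he,
    lintegral_map he hm]
  simp

lemma lintegral_atoms3 (η : Measure X) (f : X → ℝ≥0∞) (hf : Measurable f)
    (w₁ w₂ w₃ : ℝ≥0∞) (x₁ x₂ x₃ : X) :
    ∫⁻ x, f x ∂(η + w₁ • Measure.dirac x₁ + w₂ • Measure.dirac x₂ + w₃ • Measure.dirac x₃)
      = ∫⁻ x, f x ∂η + w₁ * f x₁ + w₂ * f x₂ + w₃ * f x₃ := by
  rw [lintegral_add_measure, lintegral_add_measure, lintegral_add_measure,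
    lintegral_smul_measure, lintegral_smul_measure, lintegral_smul_measure,
    lintegral_dirac' _ hf, lintegral_dirac' _ hf, lintegral_dirac' _ hf]
  simp only [smul_eq_mul]

lemma moment_all {η : Measure X} [IsFiniteMeasure η] (hη : HasFiniteFirstMoment η) (y : X) :
    ∫⁻ x, edist x y ∂η ≠ ⊤ := by
  obtain ⟨x₀, hx₀⟩ := hη
  have h : ∫⁻ x, edist x y ∂η ≤ ∫⁻ x, (edist x x₀ + edist x₀ y) ∂η :=
    lintegral_mono fun x => edist_triangle _ _ _
  rw [lintegral_add_right _ measurable_const, lintegral_const] at h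
  exact ne_top_of_le_ne_top
    (ENNReal.add_ne_top.2 ⟨hx₀, ENNReal.mul_ne_top (edist_ne_top _ _) (measure_ne_top _ _)⟩) h

lemma W1_comm (μ ν : Measure X) : W1 μ ν = W1 ν μ := by
  have : SecondCountableTopology X := UniformSpace.secondCountable_of_separable X
  have key : ∀ α β : Measure X, W1 α β ≤ W1 β α := by
    intro α β
    refine le_iInf₂ fun π hπ => ?_
    have hc : IsCoupling α β (π.map Prod.swap) := by
      constructor
      · rw [Measure.map_map measurable_fst measurable_swap]; exact hπ.2
      · rw [Measure.map_map measurable_snd measurable_swap]; exact hπ.1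
    refine (iInf₂_le _ hc).trans (le_of_eq ?_)
    rw [lintegral_map continuous_edist.measurable measurable_swap]
    exact lintegral_congr fun p => edist_comm _ _
  exact le_antisymm (key μ ν) (key ν μ)

/-- canonical three-atom measure -/
noncomputable def m3 (η : Measure X) (x₁ x₂ x₃ : X) (a₁ a₂ a₃ : ℝ) : Measure X :=
  η + ENNReal.ofReal a₁ • Measure.dirac x₁ + ENNReal.ofReal a₂ • Measure.dirac x₂
    + ENNReal.ofReal a₃ • Measure.dirac x₃

lemma lintegral_m3 (η : Measure X) (x₁ x₂ x₃ : X) (a₁ a₂ a₃ : ℝ)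
    (ha₁ : 0 ≤ a₁) (ha₂ : 0 ≤ a₂) :
    ∫⁻ x, edist x x₃ ∂(m3 η x₁ x₂ x₃ a₁ a₂ a₃)
      = ∫⁻ x, edist x x₃ ∂η + ENNReal.ofReal (a₁ * dist x₁ x₃ + a₂ * dist x₂ x₃) := by
  rw [m3, lintegral_atoms3 _ _ (by fun_prop)]
  rw [edist_self, mul_zero, add_zero, edist_dist, edist_dist,
    ← ENNReal.ofReal_mul ha₁, ← ENNReal.ofReal_mul ha₂,
    add_assoc, ← ENNReal.ofReal_add (by positivity) (by positivity)]

lemma W1_master (η : Measure X) (x₁ x₂ x₃ : X)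
    (hseg : dist x₁ x₂ + dist x₂ x₃ = dist x₁ x₃)
    (hfin : ∫⁻ x, edist x x₃ ∂η ≠ ⊤)
    {a₁ a₂ a₃ b₁ b₂ b₃ : ℝ}
    (ha₁ : 0 ≤ a₁) (ha₂ : 0 ≤ a₂) (ha₃ : 0 ≤ a₃)
    (hb₁ : 0 ≤ b₁) (hb₂ : 0 ≤ b₂) (hb₃ : 0 ≤ b₃)
    (hsum : a₁ + a₂ + a₃ = b₁ + b₂ + b₃) (h₁ : b₁ ≤ a₁) (h₃ : a₃ ≤ b₃) :
    W1 (m3 η x₁ x₂ x₃ a₁ a₂ a₃) (m3 η x₁ x₂ x₃ b₁ b₂ b₃)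
      = ENNReal.ofReal ((a₁ - b₁) * dist x₁ x₂ + (b₃ - a₃) * dist x₂ x₃) := by
  have hd12 : (0:ℝ) ≤ dist x₁ x₂ := dist_nonneg
  have hd23 : (0:ℝ) ≤ dist x₂ x₃ := dist_nonneg
  have htgt : (0:ℝ) ≤ (a₁ - b₁) * dist x₁ x₂ + (b₃ - a₃) * dist x₂ x₃ := by
    have := sub_nonneg.2 h₁; have := sub_nonneg.2 h₃; positivity
  refine le_antisymm ?_ ?_
  · -- upper bound via explicit coupling
    rcases le_total b₂ a₂ with hc | hc
    · have hcoup := isCoupling_diag_atoms (m3 η x₁ x₂ x₃ b₁ b₂ a₃)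
        (ENNReal.ofReal (a₁ - b₁)) (ENNReal.ofReal (a₂ - b₂)) (x₁, x₃) (x₂, x₃)
      have e1 : m3 η x₁ x₂ x₃ b₁ b₂ a₃ + ENNReal.ofReal (a₁ - b₁) • Measure.dirac x₁
          + ENNReal.ofReal (a₂ - b₂) • Measure.dirac x₂ = m3 η x₁ x₂ x₃ a₁ a₂ a₃ := by
        unfold m3
        have eq1 : ENNReal.ofReal a₁ = ENNReal.ofReal b₁ + ENNReal.ofReal (a₁ - b₁) := by
          rw [← ENNReal.ofReal_add hb₁ (by linarith)]; congr 1; ring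
        have eq2 : ENNReal.ofReal a₂ = ENNReal.ofReal b₂ + ENNReal.ofReal (a₂ - b₂) := by
          rw [← ENNReal.ofReal_add hb₂ (by linarith)]; congr 1; ring
        rw [eq1, eq2, add_smul, add_smul]; abel
      have e2 : m3 η x₁ x₂ x₃ b₁ b₂ a₃ + ENNReal.ofReal (a₁ - b₁) • Measure.dirac x₃
          + ENNReal.ofReal (a₂ - b₂) • Measure.dirac x₃ = m3 η x₁ x₂ x₃ b₁ b₂ b₃ := by
        unfold m3
        have eq3 : ENNReal.ofReal b₃
            = ENNReal.ofReal a₃ + ENNReal.ofReal (a₁ - b₁) + ENNReal.ofReal (a₂ - b₂) := by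
          rw [← ENNReal.ofReal_add ha₃ (by linarith), ← ENNReal.ofReal_add (by linarith) (by linarith)]
          congr 1; linarith
        rw [eq3, add_smul, add_smul]; abel
      rw [e1, e2] at hcoup
      refine (W1_le_of_coupling hcoup).trans (le_of_eq ?_)
      rw [cost_diag_atoms]
      simp only [edist_dist]
      rw [← ENNReal.ofReal_mul (by linarith), ← ENNReal.ofReal_mul (by linarith),
        ← ENNReal.ofReal_add (mul_nonneg (by linarith) dist_nonneg)
          (mul_nonneg (by linarith) dist_nonneg)]
      congr 1
      linear_combination (b₁ - a₁) * hseg + dist x₂ x₃ * hsum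
    · have hcoup := isCoupling_diag_atoms (m3 η x₁ x₂ x₃ b₁ a₂ a₃)
        (ENNReal.ofReal (b₂ - a₂)) (ENNReal.ofReal (b₃ - a₃)) (x₁, x₂) (x₁, x₃)
      have e1 : m3 η x₁ x₂ x₃ b₁ a₂ a₃ + ENNReal.ofReal (b₂ - a₂) • Measure.dirac x₁
          + ENNReal.ofReal (b₃ - a₃) • Measure.dirac x₁ = m3 η x₁ x₂ x₃ a₁ a₂ a₃ := by
        unfold m3
        have eq1 : ENNReal.ofReal a₁
            = ENNReal.ofReal b₁ + ENNReal.ofReal (b₂ - a₂) + ENNReal.ofReal (b₃ - a₃) := by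
          rw [← ENNReal.ofReal_add hb₁ (by linarith), ← ENNReal.ofReal_add (by linarith) (by linarith)]
          congr 1; linarith
        rw [eq1, add_smul, add_smul]; abel
      have e2 : m3 η x₁ x₂ x₃ b₁ a₂ a₃ + ENNReal.ofReal (b₂ - a₂) • Measure.dirac x₂
          + ENNReal.ofReal (b₃ - a₃) • Measure.dirac x₃ = m3 η x₁ x₂ x₃ b₁ b₂ b₃ := by
        unfold m3
        have eq2 : ENNReal.ofReal b₂ = ENNReal.ofReal a₂ + ENNReal.ofReal (b₂ - a₂) := by
          rw [← ENNReal.ofReal_add ha₂ (by linarith)]; congr 1; ring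
        have eq3 : ENNReal.ofReal b₃ = ENNReal.ofReal a₃ + ENNReal.ofReal (b₃ - a₃) := by
          rw [← ENNReal.ofReal_add ha₃ (by linarith)]; congr 1; ring
        rw [eq2, eq3, add_smul, add_smul]; abel
      rw [e1, e2] at hcoup
      refine (W1_le_of_coupling hcoup).trans (le_of_eq ?_)
      rw [cost_diag_atoms]
      simp only [edist_dist]
      rw [← ENNReal.ofReal_mul (by linarith), ← ENNReal.ofReal_mul (by linarith),
        ← ENNReal.ofReal_add (mul_nonneg (by linarith) dist_nonneg)
          (mul_nonneg (by linarith) dist_nonneg)]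
      congr 1
      linear_combination (a₃ - b₃) * hseg - dist x₁ x₂ * hsum
  · -- lower bound via test function edist (·, x₃)
    refine le_W1_of x₃ _ ?_ ?_
    · rw [lintegral_m3 _ _ _ _ _ _ _ hb₁ hb₂]
      exact ENNReal.add_ne_top.2 ⟨hfin, ENNReal.ofReal_ne_top⟩
    · rw [lintegral_m3 _ _ _ _ _ _ _ hb₁ hb₂, lintegral_m3 _ _ _ _ _ _ _ ha₁ ha₂]
      have hreal : (a₁ - b₁) * dist x₁ x₂ + (b₃ - a₃) * dist x₂ x₃
          + (b₁ * dist x₁ x₃ + b₂ * dist x₂ x₃) = a₁ * dist x₁ x₃ + a₂ * dist x₂ x₃ := by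
        linear_combination (a₁ - b₁) * hseg - dist x₂ x₃ * hsum
      rw [← hreal, ENNReal.ofReal_add htgt (by positivity)]
      refine le_of_eq ?_
      ring

lemma memW1_m3 (η : Measure X) [IsFiniteMeasure η] (hη : HasFiniteFirstMoment η)
    (x₁ x₂ x₃ : X) (a₁ a₂ a₃ : ℝ) (h₁ : 0 ≤ a₁) (h₂ : 0 ≤ a₂) (h₃ : 0 ≤ a₃)
    (hmass : η univ + ENNReal.ofReal (a₁ + a₂ + a₃) = 1) :
    MemW1 (m3 η x₁ x₂ x₃ a₁ a₂ a₃) := by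
  constructor
  · constructor
    have h : m3 η x₁ x₂ x₃ a₁ a₂ a₃ univ
        = η univ + ENNReal.ofReal a₁ + ENNReal.ofReal a₂ + ENNReal.ofReal a₃ := by
      simp [m3]
    rw [h, add_assoc, add_assoc, ← add_assoc (ENNReal.ofReal a₁),
      ← ENNReal.ofReal_add h₁ h₂, ← ENNReal.ofReal_add (by positivity) h₃]
    exact hmass
  · exact ⟨x₃, by
      rw [lintegral_m3 _ _ _ _ _ _ _ h₁ h₂]
      exact ENNReal.add_ne_top.2 ⟨moment_all hη x₃, ENNReal.ofReal_ne_top⟩⟩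

end Helpers

set_option maxHeartbeats 1000000

theorem stmt7 {X : Type*} [MetricSpace X] [CompleteSpace X]
    [TopologicalSpace.SeparableSpace X] [MeasurableSpace X] [BorelSpace X]
    (η : Measure X) [IsFiniteMeasure η] (hη : HasFiniteFirstMoment η)
    (c : ℝ) (hc : 0 < c) (q q' z : X) (hne : q ≠ q')
    (hzq : z ≠ q) (hzq' : z ≠ q')
    (hzseg : dist q z + dist z q' = dist q q')
    (μ ν : Measure X)
    (hμdef : μ = η + ENNReal.ofReal c • Measure.dirac q)
    (hνdef : ν = η + ENNReal.ofReal c • Measure.dirac q')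
    (hμ : MemW1 μ) (hν : MemW1 ν)
    (T T' : ℝ) (hT : ENNReal.ofReal T = W1 μ ν) (hT0 : 0 < T)
    (hT' : ENNReal.ofReal T' = W1 μ (η + ENNReal.ofReal c • Measure.dirac z))
    (hT'0 : 0 < T') (hT'T : T' < T) :
    IsUnitSpeedGeodesicOn (brokenGeodesic η c T T' q z q') 0 T ∧
    brokenGeodesic η c T T' q z q' 0 = μ ∧
    brokenGeodesic η c T T' q z q' T = ν ∧
    brokenGeodesic η c T T' q z q' T' = η + ENNReal.ofReal c • Measure.dirac z ∧
    (∃ t ∈ Icc (0 : ℝ) T, brokenGeodesic η c T T' q z q' t ≠ linInterp μ ν T t) ∧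
    ∃ γ₁ γ₂ : ℝ → Measure X,
      IsUnitSpeedGeodesicOn γ₁ 0 T ∧ γ₁ 0 = μ ∧ γ₁ T = ν ∧
      IsUnitSpeedGeodesicOn γ₂ 0 T ∧ γ₂ 0 = μ ∧ γ₂ T = ν ∧
      ∃ t ∈ Icc (0 : ℝ) T, γ₁ t ≠ γ₂ t := by
  obtain ⟨hμP, hμM⟩ := hμ
  have hdq : (0:ℝ) < dist q z := dist_pos.2 (Ne.symm hzq)
  have hdz : (0:ℝ) < dist z q' := dist_pos.2 hzq'
  have hfinq' := moment_all hη q'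
  have hT'ne : T' ≠ 0 := ne_of_gt hT'0
  have hTT'pos : (0:ℝ) < T - T' := by linarith
  have hTT'ne : T - T' ≠ 0 := ne_of_gt hTT'pos
  have hTne : T ≠ 0 := ne_of_gt hT0
  -- canonical representations
  have hμ3 : μ = m3 η q z q' c 0 0 := by simp [hμdef, m3]
  have hν3 : ν = m3 η q z q' 0 0 c := by simp [hνdef, m3]
  have hξ3 : η + ENNReal.ofReal c • Measure.dirac z = m3 η q z q' 0 c 0 := by simp [m3]
  -- value of T
  have hTv : T = c * dist q z + c * dist z q' := by
    have hm := W1_master η q z q' hzseg hfinq' hc.le le_rfl le_rfl le_rfl le_rfl hc.le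
      (by ring) hc.le hc.le
    rw [← hμ3, ← hν3] at hm
    have h2 := hT.trans hm
    have h3 := (ENNReal.ofReal_eq_ofReal_iff hT0.le
      (by nlinarith [mul_nonneg hc.le hdq.le, mul_nonneg hc.le hdz.le])).1 h2
    linarith
  -- value of T'
  have hT'v : T' = c * dist q z := by
    have hm := W1_master η q z q' hzseg hfinq' hc.le le_rfl le_rfl le_rfl hc.le le_rfl
      (by ring) hc.le le_rfl
    rw [← hμ3, ← hξ3] at hm
    have h2 := hT'.trans hm
    have h3 := (ENNReal.ofReal_eq_ofReal_iff hT'0.le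
      (by nlinarith [mul_nonneg hc.le hdq.le])).1 h2
    linarith
  have hd2T : T - T' = c * dist z q' := by rw [hTv, hT'v]; ring
  have hdqz : dist q z = T' / c := by rw [eq_div_iff (ne_of_gt hc), mul_comm]; exact hT'v.symm
  have hdzq' : dist z q' = (T - T') / c := by
    rw [eq_div_iff (ne_of_gt hc), mul_comm]; exact hd2T.symm
  -- total mass
  have hmass : η univ + ENNReal.ofReal c = 1 := by
    have h := hμP.measure_univ
    rw [hμdef] at h
    simpa using h
  -- representation of the broken geodesic
  have hrep : ∀ t : ℝ, brokenGeodesic η c T T' q z q' t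
      = m3 η q z q' (if t ≤ T' then (1 - t / T') * c else 0)
          (if t ≤ T' then t / T' * c else (1 - (t - T') / (T - T')) * c)
          (if t ≤ T' then 0 else (t - T') / (T - T') * c) := by
    intro t
    simp only [brokenGeodesic]
    split_ifs with h
    · simp [m3]
    · simp [m3]
  -- coefficient facts
  have hcoef1 : ∀ t, 0 ≤ t → t ≤ T' → 0 ≤ (1 - t / T') * c ∧ 0 ≤ t / T' * c := by
    intro t h0 h1
    constructor
    · exact mul_nonneg (by rw [sub_nonneg]; exact div_le_one_of_le₀ h1 hT'0.le) hc.le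
    · exact mul_nonneg (div_nonneg h0 hT'0.le) hc.le
  have hcoef2 : ∀ t, T' ≤ t → t ≤ T →
      0 ≤ (1 - (t - T') / (T - T')) * c ∧ 0 ≤ (t - T') / (T - T') * c := by
    intro t h0 h1
    constructor
    · refine mul_nonneg (by rw [sub_nonneg]; exact div_le_one_of_le₀ (by linarith) hTT'pos.le) hc.le
    · exact mul_nonneg (div_nonneg (by linarith) hTT'pos.le) hc.le
  -- distance along the broken geodesic (ordered case)
  have hW : ∀ s ∈ Icc (0:ℝ) T, ∀ t ∈ Icc (0:ℝ) T, s ≤ t →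
      W1 (brokenGeodesic η c T T' q z q' s) (brokenGeodesic η c T T' q z q' t)
        = ENNReal.ofReal (t - s) := by
    intro s hs t ht hst
    rw [hrep s, hrep t]
    rcases le_or_gt t T' with h2 | h2
    · have h1 : s ≤ T' := le_trans hst h2
      obtain ⟨hsa, hsb⟩ := hcoef1 s hs.1 h1
      obtain ⟨hta, htb⟩ := hcoef1 t ht.1 h2
      simp only [if_pos h1, if_pos h2]
      rw [W1_master η q z q' hzseg hfinq' hsa hsb le_rfl hta htb le_rfl (by ring)
        (by have hdiv : s / T' ≤ t / T' := by gcongr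
            exact mul_le_mul_of_nonneg_right (by linarith) hc.le) le_rfl]
      congr 1
      rw [hdqz, hdzq']
      field_simp
      try ring
    · rcases le_or_gt s T' with h1 | h1
      · obtain ⟨hsa, hsb⟩ := hcoef1 s hs.1 h1
        obtain ⟨htb, htc⟩ := hcoef2 t h2.le ht.2
        simp only [if_pos h1, if_neg (not_le.2 h2)]
        rw [W1_master η q z q' hzseg hfinq' hsa hsb le_rfl le_rfl htb htc
          (by field_simp; try ring) hsa htc]
        congr 1
        rw [hdqz, hdzq']
        field_simp
        try ring
      · obtain ⟨hsb, hsc⟩ := hcoef2 s h1.le hs.2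
        obtain ⟨htb, htc⟩ := hcoef2 t h2.le ht.2
        simp only [if_neg (not_le.2 h1), if_neg (not_le.2 h2)]
        rw [W1_master η q z q' hzseg hfinq' le_rfl hsb hsc le_rfl htb htc
          (by ring)
          le_rfl
          (by have hdiv : (s - T') / (T - T') ≤ (t - T') / (T - T') := by gcongr <;> linarith
              exact mul_le_mul_of_nonneg_right hdiv hc.le)]
        congr 1
        rw [hdqz, hdzq']
        field_simp
        try ring
  -- membership of the broken geodesic
  have hmem : ∀ t ∈ Icc (0:ℝ) T, MemW1 (brokenGeodesic η c T T' q z q' t) := by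
    intro t ht
    rw [hrep t]
    rcases le_or_gt t T' with h1 | h1
    · obtain ⟨ha, hb⟩ := hcoef1 t ht.1 h1
      simp only [if_pos h1]
      refine memW1_m3 η hη q z q' _ _ _ ha hb le_rfl ?_
      have : (1 - t / T') * c + t / T' * c + 0 = c := by field_simp; try ring
      rw [this]; exact hmass
    · obtain ⟨hb, hc'⟩ := hcoef2 t h1.le ht.2
      simp only [if_neg (not_le.2 h1)]
      refine memW1_m3 η hη q z q' _ _ _ le_rfl hb hc' ?_
      have : 0 + ((1 - (t - T') / (T - T')) * c + (t - T') / (T - T') * c) = c := by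
        field_simp; try ring
      rw [← add_assoc] at this
      rw [this]; exact hmass
  -- endpoints
  have hb0 : brokenGeodesic η c T T' q z q' 0 = μ := by
    simp only [brokenGeodesic, if_pos hT'0.le]
    simp [hμdef]
  have hbT : brokenGeodesic η c T T' q z q' T = ν := by
    simp only [brokenGeodesic, if_neg (not_le.2 hT'T)]
    simp [hνdef, div_self hTT'ne]
  have hbT' : brokenGeodesic η c T T' q z q' T' = η + ENNReal.ofReal c • Measure.dirac z := by
    simp only [brokenGeodesic, if_pos le_rfl]
    simp [div_self hT'ne]
  -- linear interpolation representation
  have hlin : ∀ t, 0 ≤ t → t ≤ T →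
      linInterp μ ν T t = m3 η q z q' ((1 - t / T) * c) 0 (t / T * c) := by
    intro t h0 h1
    have ha : (0:ℝ) ≤ 1 - t / T := by rw [sub_nonneg]; exact div_le_one_of_le₀ h1 hT0.le
    have hb : (0:ℝ) ≤ t / T := div_nonneg h0 hT0.le
    have hη1 : ENNReal.ofReal (1 - t / T) • η + ENNReal.ofReal (t / T) • η = η := by
      rw [← add_smul, ← ENNReal.ofReal_add ha hb]
      norm_num
    simp only [linInterp, hμdef, hνdef, smul_add, smul_smul]
    rw [← ENNReal.ofReal_mul ha, ← ENNReal.ofReal_mul hb]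
    rw [show m3 η q z q' ((1 - t / T) * c) 0 (t / T * c)
        = (ENNReal.ofReal (1 - t / T) • η + ENNReal.ofReal (t / T) • η)
          + ENNReal.ofReal ((1 - t / T) * c) • Measure.dirac q
          + ENNReal.ofReal (t / T * c) • Measure.dirac q' by
      rw [hη1]; simp [m3]]
    abel
  -- linear interpolation is a geodesic
  have hlinmem : ∀ t ∈ Icc (0:ℝ) T, MemW1 (linInterp μ ν T t) := by
    intro t ht
    rw [hlin t ht.1 ht.2]
    have ha : (0:ℝ) ≤ (1 - t / T) * c :=
      mul_nonneg (by rw [sub_nonneg]; exact div_le_one_of_le₀ ht.2 hT0.le) hc.le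
    have hb : (0:ℝ) ≤ t / T * c := mul_nonneg (div_nonneg ht.1 hT0.le) hc.le
    refine memW1_m3 η hη q z q' _ _ _ ha le_rfl hb ?_
    have : (1 - t / T) * c + 0 + t / T * c = c := by field_simp; try ring
    rw [this]; exact hmass
  have hlinW : ∀ s ∈ Icc (0:ℝ) T, ∀ t ∈ Icc (0:ℝ) T, s ≤ t →
      W1 (linInterp μ ν T s) (linInterp μ ν T t) = ENNReal.ofReal (t - s) := by
    intro s hs t ht hst
    rw [hlin s hs.1 hs.2, hlin t ht.1 ht.2]
    have hsa : (0:ℝ) ≤ (1 - s / T) * c :=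
      mul_nonneg (by rw [sub_nonneg]; exact div_le_one_of_le₀ hs.2 hT0.le) hc.le
    have hsc : (0:ℝ) ≤ s / T * c := mul_nonneg (div_nonneg hs.1 hT0.le) hc.le
    have hta : (0:ℝ) ≤ (1 - t / T) * c :=
      mul_nonneg (by rw [sub_nonneg]; exact div_le_one_of_le₀ ht.2 hT0.le) hc.le
    have htc : (0:ℝ) ≤ t / T * c := mul_nonneg (div_nonneg ht.1 hT0.le) hc.le
    rw [W1_master η q z q' hzseg hfinq' hsa le_rfl hsc hta le_rfl htc (by ring)
      (by have hdiv : s / T ≤ t / T := by gcongr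
          exact mul_le_mul_of_nonneg_right (by linarith) hc.le)
      (by have hdiv : s / T ≤ t / T := by gcongr
          exact mul_le_mul_of_nonneg_right hdiv hc.le)]
    congr 1
    rw [hdqz, hdzq']
    field_simp
    try ring
  -- symmetric wrapper
  have symW : ∀ γ : ℝ → Measure X,
      (∀ s ∈ Icc (0:ℝ) T, ∀ t ∈ Icc (0:ℝ) T, s ≤ t →
        W1 (γ s) (γ t) = ENNReal.ofReal (t - s)) →
      ∀ s ∈ Icc (0:ℝ) T, ∀ t ∈ Icc (0:ℝ) T, W1 (γ s) (γ t) = ENNReal.ofReal |s - t| := by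
    intro γ h s hs t ht
    rcases le_total s t with hst | hst
    · rw [h s hs t ht hst, abs_sub_comm, abs_of_nonneg (by linarith)]
    · rw [W1_comm, h t ht s hs hst, abs_of_nonneg (by linarith)]
  -- difference at T'
  have hsingq : MeasurableSet ({q} : Set X) := (isClosed_singleton).measurableSet
  have hdiff : brokenGeodesic η c T T' q z q' T' ≠ linInterp μ ν T T' := by
    intro hEq
    rw [hbT', hlin T' hT'0.le hT'T.le] at hEq
    have h1 := congrArg (fun m : Measure X => m {q}) hEq
    simp only [m3, Measure.add_apply, Measure.smul_apply, smul_eq_mul,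
      Measure.dirac_apply' _ hsingq] at h1
    rw [Set.indicator_of_notMem (by simpa using hzq) 1,
      Set.indicator_of_mem (Set.mem_singleton q) 1,
      Set.indicator_of_notMem (by simpa using (Ne.symm hne)) 1] at h1
    simp only [Pi.one_apply, mul_zero, mul_one, add_zero, ENNReal.ofReal_zero, zero_mul] at h1
    have hpos : 0 < ENNReal.ofReal ((1 - T' / T) * c) := by
      refine ENNReal.ofReal_pos.2 (mul_pos ?_ hc)
      have := (div_lt_one hT0).2 hT'T
      linarith
    exact absurd h1 (ne_of_lt (ENNReal.lt_add_right (measure_ne_top η _) hpos.ne'))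
  have hgeo1 : IsUnitSpeedGeodesicOn (brokenGeodesic η c T T' q z q') 0 T :=
    ⟨hmem, symW _ hW⟩
  have hgeo2 : IsUnitSpeedGeodesicOn (fun t => linInterp μ ν T t) 0 T :=
    ⟨hlinmem, symW _ hlinW⟩
  have hlin0 : linInterp μ ν T 0 = μ := by
    rw [hlin 0 le_rfl hT0.le, hμ3]
    norm_num
  have hlinT : linInterp μ ν T T = ν := by
    rw [hlin T hT0.le le_rfl, hν3, div_self hTne]
    norm_num
  refine ⟨hgeo1, hb0, hbT, hbT',
    ⟨T', ⟨hT'0.le, hT'T.le⟩, hdiff⟩,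
    brokenGeodesic η c T T' q z q', fun t => linInterp μ ν T t,
    hgeo1, hb0, hbT, hgeo2, hlin0, hlinT, T', ⟨hT'0.le, hT'T.le⟩, hdiff⟩
end
end

section
/- Let (X,ϱ) be a complete and separable metric space with at least two points, let q, q' ∈ X satisfy q ∼ q', and let ξ be a Borel probability measure on X with finite first moment such that d₁(ξ, δ_{q'}) = d₁(ξ, δ_q) + ϱ(q,q'). Then the support of ξ is contained in {q, q'}. -/
open MeasureTheory Set
open scoped ENNReal

noncomputable section

/-- The (topological) support of a measure: the set of points all of whose open
neighbourhoods have positive measure. -/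
def measSupport {X : Type*} [TopologicalSpace X] [MeasurableSpace X]
    (μ : Measure X) : Set X :=
  {x | ∀ U : Set X, IsOpen U → x ∈ U → 0 < μ U}

lemma W1_dirac {X : Type*} [MetricSpace X] [TopologicalSpace.SeparableSpace X]
    [MeasurableSpace X] [BorelSpace X]
    (ξ : Measure X) [IsProbabilityMeasure ξ] (x : X) :
    W1 ξ (Measure.dirac x) = ∫⁻ y, edist y x ∂ξ := by
  haveI : SecondCountableTopology X := UniformSpace.secondCountable_of_separable X
  apply le_antisymm
  · have hmeas : Measurable (fun y : X => (y, x)) := measurable_id.prodMk measurable_const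
    have hc : IsCoupling ξ (Measure.dirac x) (ξ.map (fun y => (y, x))) := by
      constructor
      · rw [Measure.map_map measurable_fst hmeas]
        exact Measure.map_id
      · rw [Measure.map_map measurable_snd hmeas]
        show ξ.map (fun _ => x) = _
        simp [Measure.map_const]
    refine le_trans (iInf₂_le _ hc) ?_
    rw [lintegral_map continuous_edist.measurable hmeas]
  · refine le_iInf₂ fun π hπ => ?_
    have hsnd : π.map Prod.snd = Measure.dirac x := hπ.2
    have hae : ∀ᵐ p ∂π, p.2 = x := by
      have h0 : π (Prod.snd ⁻¹' ({x}ᶜ)) = 0 := by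
        have := congrArg (fun m : Measure X => m ({x}ᶜ)) hsnd
        simpa [Measure.map_apply measurable_snd (measurableSet_singleton x).compl] using this
      rw [ae_iff]
      exact h0
    refine le_of_eq ?_
    calc ∫⁻ y, edist y x ∂ξ = ∫⁻ y, edist y x ∂(π.map Prod.fst) := by rw [hπ.1]
      _ = ∫⁻ p, edist p.1 x ∂π :=
          (lintegral_map (continuous_id.edist continuous_const).measurable measurable_fst)
      _ = ∫⁻ p, edist p.1 p.2 ∂π :=
          lintegral_congr_ae (hae.mono fun p hp => by simp only [hp])

theorem stmt9 {X : Type*} [MetricSpace X] [CompleteSpace X]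
    [TopologicalSpace.SeparableSpace X] [Nontrivial X]
    [MeasurableSpace X] [BorelSpace X]
    (q q' : X) (hqq' : PointRel q q')
    (ξ : Measure X) [IsProbabilityMeasure ξ] (hξm : HasFiniteFirstMoment ξ)
    (heq : W1 ξ (Measure.dirac q') = W1 ξ (Measure.dirac q) + edist q q') :
    measSupport ξ ⊆ {q, q'} := by
  haveI : SecondCountableTopology X := UniformSpace.secondCountable_of_separable X
  -- rewrite both Wasserstein distances as integrals
  rw [W1_dirac, W1_dirac] at heq
  obtain ⟨x₀, hx₀⟩ := hξm
  have hfin : ∫⁻ y, edist y q ∂ξ ≠ ⊤ := by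
    have hle : ∫⁻ y, edist y q ∂ξ ≤ ∫⁻ y, edist y x₀ ∂ξ + edist x₀ q := by
      calc ∫⁻ y, edist y q ∂ξ ≤ ∫⁻ y, (edist y x₀ + edist x₀ q) ∂ξ :=
            lintegral_mono fun y => edist_triangle _ _ _
        _ = ∫⁻ y, edist y x₀ ∂ξ + edist x₀ q := by
            rw [lintegral_add_right _ measurable_const, lintegral_const, measure_univ, mul_one]
    exact ne_top_of_le_ne_top (ENNReal.add_ne_top.2 ⟨hx₀, edist_ne_top _ _⟩) hle
  have hrhs : ∫⁻ y, edist y q ∂ξ + edist q q' = ∫⁻ y, (edist y q + edist q q') ∂ξ := by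
    rw [lintegral_add_right _ measurable_const, lintegral_const, measure_univ, mul_one]
  rw [hrhs] at heq
  have hmg : AEMeasurable (fun y => edist y q + edist q q') ξ :=
    ((continuous_id.edist continuous_const).measurable.add_const _).aemeasurable
  have hae : (fun y => edist y q') =ᵐ[ξ] (fun y => edist y q + edist q q') := by
    refine ae_eq_of_ae_le_of_lintegral_le (ae_of_all _ fun y => edist_triangle _ _ _) ?_ hmg
      (le_of_eq heq.symm)
    rw [heq, ← hrhs]
    exact ENNReal.add_ne_top.2 ⟨hfin, edist_ne_top _ _⟩
  set A : Set X := {y | edist y q' = edist y q + edist q q'} with hA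
  have hAc : ξ Aᶜ = 0 := by
    have h := hae
    rw [Filter.EventuallyEq, ae_iff] at h
    simpa [hA, compl_setOf] using h
  have hAclosed : IsClosed A := isClosed_eq (continuous_id.edist continuous_const)
      ((continuous_id.edist continuous_const).add continuous_const)
  have hAopen : IsOpen Aᶜ := hAclosed.isOpen_compl
  intro x hx
  have hxA : x ∈ A := by
    by_contra hxA
    have := hx Aᶜ hAopen hxA
    rw [hAc] at this
    exact lt_irrefl _ this
  -- convert to real distances
  have hdist : dist x q' = dist x q + dist q q' := by
    have := hxA
    simp only [hA, mem_setOf_eq, edist_dist] at this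
    rw [← ENNReal.ofReal_add dist_nonneg dist_nonneg] at this
    have := ENNReal.ofReal_eq_ofReal_iff dist_nonneg (by positivity) |>.1 this
    linarith
  have h3 := (hqq' x).2.2
  have : dist q' x = dist q' q + dist q x := by
    rw [dist_comm q' x, dist_comm q' q, dist_comm q x]
    linarith
  rcases h3 this with h | h
  · exact Or.inl h
  · exact Or.inr h
end
end

section
/- Let ℍⁿ be the Heisenberg group, identified with ℝ^{2n+1} as a set. For r > 0 define the Hebisch–Sikora function N_{HS}(q) := inf{ t > 0 : δ_{1/t}(q) ∈ B(0,r) }, where B(0,r) is the Euclidean ball of radius r centered at the origin of ℝ^{2n+1}. Then there exists r₀ > 0 such that for all 0 < r < r₀: (a) N_{HS} is a homogeneous norm on ℍⁿ, and (b) N_{HS} is horizontally strictly convex; moreover, for q₁, q₂ ≠ 0, equality N_{HS}(q₁·q₂) = N_{HS}(q₁) + N_{HS}(q₂) holds if and only if q₁ = ((s₁ w), 0) and q₂ = ((s₂ w), 0) for some w ∈ ℝ^{2n} and s₁, s₂ > 0. -/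
open MeasureTheory Set
open scoped ENNReal

noncomputable section

/-- The underlying set of the Heisenberg group `ℍⁿ = ℝⁿ × ℝⁿ × ℝ`. -/
abbrev Heis (n : ℕ) : Type := (Fin n → ℝ) × (Fin n → ℝ) × ℝ

/-- The Heisenberg group law
`(x,y,z)·(x',y',z') = (x+x', y+y', z+z'+2∑ (x'ᵢ yᵢ - xᵢ y'ᵢ))`. -/
def hMul {n : ℕ} (p q : Heis n) : Heis n :=
  (p.1 + q.1, p.2.1 + q.2.1,
    p.2.2 + q.2.2 + 2 * ∑ i, (q.1 i * p.2.1 i - p.1 i * q.2.1 i))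

/-- The group inverse in the Heisenberg group. -/
def hInv {n : ℕ} (p : Heis n) : Heis n := (-p.1, -p.2.1, -p.2.2)

/-- The non-isotropic dilation `δ_λ(x,y,z) = (λx, λy, λ²z)`. -/
def hDil {n : ℕ} (lam : ℝ) (p : Heis n) : Heis n :=
  (lam • p.1, lam • p.2.1, lam ^ 2 * p.2.2)

/-- The Korányi norm `‖(x,y,z)‖_K = ((∑ (xᵢ² + yᵢ²))² + z²)^{1/4}`. -/
noncomputable def koranyiNorm {n : ℕ} (p : Heis n) : ℝ :=
  ((∑ i, ((p.1 i) ^ 2 + (p.2.1 i) ^ 2)) ^ 2 + (p.2.2) ^ 2) ^ ((1 : ℝ) / 4)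

/-- The Heisenberg–Korányi distance `d_K(q,q') = ‖q⁻¹·q'‖_K`. -/
noncomputable def dK {n : ℕ} (p q : Heis n) : ℝ := koranyiNorm (hMul (hInv p) q)

/-- A homogeneous norm on the Heisenberg group. -/
def IsHomNorm {n : ℕ} (N : Heis n → ℝ) : Prop :=
  (∀ q, 0 ≤ N q) ∧ (∀ q, N q = 0 ↔ q = 0) ∧ (∀ q, N (hInv q) = N q) ∧
  (∀ q q', N (hMul q q') ≤ N q + N q') ∧
  (∀ lam : ℝ, 0 < lam → ∀ q, N (hDil lam q) = lam * N q)

/-- A norm on `ℍⁿ` is horizontally strictly convex if the triangle inequality is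
saturated only by points lying on a common horizontal line through the origin. -/
def IsHSC {n : ℕ} (N : Heis n → ℝ) : Prop :=
  ∀ q q' : Heis n, q ≠ 0 → q' ≠ 0 → N (hMul q q') = N q + N q' →
    ∃ (w : (Fin n → ℝ) × (Fin n → ℝ)) (s s' : ℝ),
      q = (s • w.1, s • w.2, 0) ∧ q' = (s' • w.1, s' • w.2, 0)

/-- The Euclidean norm on the underlying set `ℝ^{2n+1}` of `ℍⁿ`. -/
noncomputable def eNormH {n : ℕ} (p : Heis n) : ℝ :=
  Real.sqrt ((∑ i, (p.1 i) ^ 2) + (∑ i, (p.2.1 i) ^ 2) + (p.2.2) ^ 2)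

/-- The Hebisch–Sikora function `N_{HS}(q) = inf {t > 0 : δ_{1/t}(q) ∈ B(0,r)}`. -/
noncomputable def NHS {n : ℕ} (r : ℝ) (q : Heis n) : ℝ :=
  sInf {t : ℝ | 0 < t ∧ eNormH (hDil (1 / t) q) < r}

/-! ### Auxiliary development -/

set_option maxHeartbeats 1000000

section Aux

/-- Scaled core inequality. -/
lemma core_le (r l m A B z z' ip om : ℝ) (hl : 0 < l) (hm : 0 < m) (hlm : l + m = 1)
    (hr2 : r^2 < 1/2) (hA : A + z^2 = r^2) (hB : B + z'^2 = r^2)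
    (hA0 : 0 ≤ A) (hB0 : 0 ≤ B) (hcs : ip^2 + om^2 ≤ A*B) :
    l^2*A + m^2*B + 2*l*m*ip + (l^2*z + m^2*z' + 2*l*m*om)^2 ≤ r^2 := by
  have hid : l^2*z^2 + m^2*z'^2 + 2*l*m*om^2 - (l^2*z+m^2*z'+2*l*m*om)^2
      = l^2*m^2*(z-z')^2 + 2*l^3*m*(z-om)^2 + 2*l*m^3*(z'-om)^2 := by
    have hm' : m = 1 - l := by linarith
    subst hm'; ring
  have hQ : (l^2*z + m^2*z' + 2*l*m*om)^2 ≤ l^2*z^2 + m^2*z'^2 + 2*l*m*om^2 := by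
    nlinarith [hid, sq_nonneg (l*m*(z-z')), sq_nonneg (z-om), sq_nonneg (z'-om),
      mul_pos (mul_pos (mul_pos hl hl) hl) hm,
      mul_pos (mul_pos (mul_pos hl hm) hm) hm, sq_nonneg (l*m)]
  have hAr : A ≤ r^2 := by nlinarith [sq_nonneg z]
  have hBr : B ≤ r^2 := by nlinarith [sq_nonneg z']
  have hab : A*B ≤ r^2*r^2 := mul_le_mul hAr hBr hB0 (by positivity)
  have h1 : ip^2 ≤ (r^2 - om^2)^2 := by nlinarith [sq_nonneg om]
  have hX : 0 ≤ r^2 - om^2 := by nlinarith [sq_nonneg ip]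
  have hH : ip + om^2 ≤ r^2 := by nlinarith [sq_nonneg (r^2 - om^2 - ip)]
  have hfin : 2*l*m*(ip + om^2) ≤ 2*l*m*r^2 :=
    mul_le_mul_of_nonneg_left hH (le_of_lt (by positivity : (0:ℝ) < 2*l*m))
  have e1 : l^2*A + l^2*z^2 = l^2*r^2 := by linear_combination (l^2) * hA
  have e2 : m^2*B + m^2*z'^2 = m^2*r^2 := by linear_combination (m^2) * hB
  have e3 : l^2*r^2 + m^2*r^2 + 2*l*m*r^2 = r^2 := by
    linear_combination (r^2*(l+m+1)) * hlm
  linarith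

/-- Scaled core equality case. -/
lemma core_eq (r l m A B z z' ip om : ℝ) (hr : 0 < r) (hl : 0 < l) (hm : 0 < m)
    (hlm : l + m = 1) (hr2 : r^2 < 1/2) (hA : A + z^2 = r^2) (hB : B + z'^2 = r^2)
    (hA0 : 0 ≤ A) (hB0 : 0 ≤ B) (hcs : ip^2 + om^2 ≤ A*B)
    (heq : l^2*A + m^2*B + 2*l*m*ip + (l^2*z + m^2*z' + 2*l*m*om)^2 = r^2) :
    om = 0 ∧ z = 0 ∧ z' = 0 ∧ A = r^2 ∧ B = r^2 ∧ ip = r^2 := by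
  have hid : l^2*z^2 + m^2*z'^2 + 2*l*m*om^2 - (l^2*z+m^2*z'+2*l*m*om)^2
      = l^2*m^2*(z-z')^2 + 2*l^3*m*(z-om)^2 + 2*l*m^3*(z'-om)^2 := by
    have hm' : m = 1 - l := by linarith
    subst hm'; ring
  have t1 : 0 ≤ l^2*m^2*(z-z')^2 := by positivity
  have t2 : 0 ≤ 2*l^3*m*(z-om)^2 := by positivity
  have t3 : 0 ≤ 2*l*m^3*(z'-om)^2 := by positivity
  have hQ : (l^2*z + m^2*z' + 2*l*m*om)^2 ≤ l^2*z^2 + m^2*z'^2 + 2*l*m*om^2 := by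
    linarith
  have hAr : A ≤ r^2 := by nlinarith [sq_nonneg z]
  have hBr : B ≤ r^2 := by nlinarith [sq_nonneg z']
  have hab : A*B ≤ r^2*r^2 := mul_le_mul hAr hBr hB0 (by positivity)
  have h1 : ip^2 ≤ (r^2 - om^2)^2 := by nlinarith [sq_nonneg om]
  have hX : 0 ≤ r^2 - om^2 := by nlinarith [sq_nonneg ip]
  have hH : ip + om^2 ≤ r^2 := by nlinarith [sq_nonneg (r^2 - om^2 - ip)]
  have e1 : l^2*A + l^2*z^2 = l^2*r^2 := by linear_combination (l^2) * hA
  have e2 : m^2*B + m^2*z'^2 = m^2*r^2 := by linear_combination (m^2) * hB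
  have e3 : l^2*r^2 + m^2*r^2 + 2*l*m*r^2 = r^2 := by
    linear_combination (r^2*(l+m+1)) * hlm
  have hlm0 : (0:ℝ) < 2*l*m := by positivity
  have hfin : 2*l*m*(ip + om^2) ≤ 2*l*m*r^2 :=
    mul_le_mul_of_nonneg_left hH (le_of_lt hlm0)
  have hS : (l^2*z^2 + m^2*z'^2 + 2*l*m*om^2 - (l^2*z+m^2*z'+2*l*m*om)^2)
      + (2*l*m*r^2 - 2*l*m*(ip + om^2)) = 0 := by linarith
  have hQT : l^2*m^2*(z-z')^2 + 2*l^3*m*(z-om)^2 + 2*l*m^3*(z'-om)^2 = 0 := by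
    linarith
  have hH0 : 2*l*m*(ip + om^2) = 2*l*m*r^2 := by linarith
  have hip : ip + om^2 = r^2 := by
    have := mul_left_cancel₀ (ne_of_gt hlm0) hH0; linarith
  have q2 : (z-om)^2 = 0 := by
    have h2 : 2*l^3*m*(z-om)^2 = 0 := by linarith
    have hc : (0:ℝ) < 2*l^3*m := by positivity
    exact (mul_eq_zero.mp h2).resolve_left (ne_of_gt hc)
  have q3 : (z'-om)^2 = 0 := by
    have h3 : 2*l*m^3*(z'-om)^2 = 0 := by linarith
    have hc : (0:ℝ) < 2*l*m^3 := by positivity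
    exact (mul_eq_zero.mp h3).resolve_left (ne_of_gt hc)
  have hz : z = om := by nlinarith [q2]
  have hz' : z' = om := by nlinarith [q3]
  rw [hz] at hA
  rw [hz'] at hB
  have hA' : A = r^2 - om^2 := by linarith
  have hB' : B = r^2 - om^2 := by linarith
  have hip' : ip = r^2 - om^2 := by linarith
  have eAB : A*B = (r^2-om^2)*(r^2-om^2) := by rw [hA', hB']
  have eip : ip^2 = (r^2-om^2)*(r^2-om^2) := by rw [hip']; ring
  have h9 : om^2 ≤ 0 := by linarith
  have hom2 : om^2 = 0 := le_antisymm h9 (sq_nonneg om)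
  have hom : om = 0 := by
    exact pow_eq_zero_iff (by norm_num) |>.mp hom2
  subst hom
  refine ⟨rfl, by simpa using hz, by simpa using hz', by simpa using hA',
    by simpa using hB', by simpa using hip'⟩

variable {n : ℕ}

/-- Squared horizontal norm. -/
def Wh (q : Heis n) : ℝ := ∑ i, ((q.1 i)^2 + (q.2.1 i)^2)

/-- Horizontal inner product. -/
def iph (p q : Heis n) : ℝ := ∑ i, (p.1 i * q.1 i + p.2.1 i * q.2.1 i)

/-- Horizontal symplectic form. -/
def omh (p q : Heis n) : ℝ := ∑ i, (q.1 i * p.2.1 i - p.1 i * q.2.1 i)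

lemma Wh_nonneg (q : Heis n) : 0 ≤ Wh q :=
  Finset.sum_nonneg fun i _ => by positivity

lemma Wh_mul (p q : Heis n) : Wh (hMul p q) = Wh p + Wh q + 2 * iph p q := by
  have h : ∀ i ∈ Finset.univ, ((hMul p q).1 i^2 + (hMul p q).2.1 i^2)
      = ((p.1 i^2 + p.2.1 i^2) + ((q.1 i^2 + q.2.1 i^2)
        + 2*(p.1 i * q.1 i + p.2.1 i * q.2.1 i))) := by
    intro i _
    simp only [hMul, Pi.add_apply]
    ring
  unfold Wh iph
  rw [Finset.sum_congr rfl h]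
  simp only [mul_add, Finset.sum_add_distrib, ← Finset.mul_sum]
  ring

lemma z_mul (p q : Heis n) : (hMul p q).2.2 = p.2.2 + q.2.2 + 2 * omh p q := rfl

/-- Complex Cauchy–Schwarz. -/
lemma cs_complex (p q : Heis n) :
    (iph p q)^2 + (omh p q)^2 ≤ Wh p * Wh q := by
  set a := p.1; set b := p.2.1; set c := q.1; set d := q.2.1
  set S : ℂ := ∑ i, (⟨a i, b i⟩ * ⟨c i, -(d i)⟩ : ℂ) with hS
  have hre : S.re = iph p q := by
    rw [hS, Complex.re_sum]
    exact Finset.sum_congr rfl fun i _ => by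
      simp [Complex.mul_re]; try ring
  have him : S.im = omh p q := by
    rw [hS, Complex.im_sum]
    exact Finset.sum_congr rfl fun i _ => by
      simp [Complex.mul_im]; try ring
  have h1 : (iph p q)^2 + (omh p q)^2 = ‖S‖ ^ 2 := by
    rw [Complex.sq_norm, Complex.normSq_apply, hre, him]; ring
  have h2 : ‖S‖ ≤ ∑ i, Real.sqrt ((a i)^2 + (b i)^2) * Real.sqrt ((c i)^2 + (d i)^2) := by
    refine le_trans (norm_sum_le _ _) (Finset.sum_le_sum fun i _ => ?_)
    rw [norm_mul]
    have e1 : ‖(⟨a i, b i⟩ : ℂ)‖ = Real.sqrt ((a i)^2 + (b i)^2) := by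
      rw [Complex.norm_def, Complex.normSq_apply]; ring_nf
    have e2 : ‖(⟨c i, -(d i)⟩ : ℂ)‖ = Real.sqrt ((c i)^2 + (d i)^2) := by
      rw [Complex.norm_def, Complex.normSq_apply]; ring_nf
    rw [e1, e2]
  have h3 : (∑ i, Real.sqrt ((a i)^2 + (b i)^2) * Real.sqrt ((c i)^2 + (d i)^2))^2
      ≤ (∑ i, ((a i)^2 + (b i)^2)) * (∑ i, ((c i)^2 + (d i)^2)) := by
    have key := Finset.sum_mul_sq_le_sq_mul_sq Finset.univ
      (fun i => Real.sqrt ((a i)^2 + (b i)^2)) (fun i => Real.sqrt ((c i)^2 + (d i)^2))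
    have ef : ∑ i, (Real.sqrt ((a i)^2 + (b i)^2))^2 = ∑ i, ((a i)^2 + (b i)^2) :=
      Finset.sum_congr rfl fun i _ => Real.sq_sqrt (by positivity)
    have eg : ∑ i, (Real.sqrt ((c i)^2 + (d i)^2))^2 = ∑ i, ((c i)^2 + (d i)^2) :=
      Finset.sum_congr rfl fun i _ => Real.sq_sqrt (by positivity)
    rw [ef, eg] at key
    exact key
  have h4 : ‖S‖ ^ 2 ≤ (∑ i, ((a i)^2 + (b i)^2)) * (∑ i, ((c i)^2 + (d i)^2)) := by
    calc ‖S‖ ^ 2 ≤ (∑ i, Real.sqrt ((a i)^2 + (b i)^2) * Real.sqrt ((c i)^2 + (d i)^2))^2 := by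
          apply pow_le_pow_left₀ (norm_nonneg S) h2
      _ ≤ _ := h3
  rw [h1]; exact h4

/-- The explicit value of the Hebisch–Sikora gauge. -/
noncomputable def Th (r : ℝ) (q : Heis n) : ℝ :=
  Real.sqrt ((Wh q + Real.sqrt ((Wh q)^2 + 4*r^2*(q.2.2)^2)) / (2*r^2))

lemma Th_nonneg (r : ℝ) (q : Heis n) : 0 ≤ Th r q := Real.sqrt_nonneg _

lemma S_nonneg (r : ℝ) (q : Heis n) :
    Wh q ≤ Real.sqrt ((Wh q)^2 + 4*r^2*(q.2.2)^2) := by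
  have h := Real.sqrt_le_sqrt (by nlinarith [sq_nonneg (r*q.2.2)] :
    (Wh q)^2 ≤ (Wh q)^2 + 4*r^2*(q.2.2)^2)
  rwa [Real.sqrt_sq (Wh_nonneg q)] at h

lemma Th_sq {r : ℝ} (hr : 0 < r) (q : Heis n) :
    (Th r q)^2 = (Wh q + Real.sqrt ((Wh q)^2 + 4*r^2*(q.2.2)^2)) / (2*r^2) := by
  apply Real.sq_sqrt
  have h1 := Wh_nonneg q
  have h2 := Real.sqrt_nonneg ((Wh q)^2 + 4*r^2*(q.2.2)^2)
  positivity

lemma Th_root {r : ℝ} (hr : 0 < r) (q : Heis n) :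
    r^2 * (Th r q)^4 = Wh q * (Th r q)^2 + (q.2.2)^2 := by
  have h2 : Real.sqrt ((Wh q)^2 + 4*r^2*(q.2.2)^2) ^ 2 = (Wh q)^2 + 4*r^2*(q.2.2)^2 :=
    Real.sq_sqrt (by positivity)
  have h3 := Th_sq hr q
  have h4 : (Th r q)^4 = ((Th r q)^2)^2 := by ring
  rw [h4, h3]
  have hr2 : (2*r^2) ≠ 0 := by positivity
  field_simp
  nlinarith [h2, Real.sq_sqrt (show (0:ℝ) ≤ Wh q ^ 2 + r ^ 2 * 4 * q.2.2 ^ 2 by positivity)]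

lemma Th_sq_ge {r : ℝ} (hr : 0 < r) (q : Heis n) :
    Wh q ≤ r^2 * (Th r q)^2 := by
  rw [Th_sq hr q]
  have h := S_nonneg r q
  have hr2 : (0:ℝ) < 2*r^2 := by positivity
  rw [mul_div_assoc']
  rw [le_div_iff₀ hr2]
  nlinarith

lemma heis_zero_iff (q : Heis n) : Wh q = 0 ∧ q.2.2 = 0 ↔ q = 0 := by
  constructor
  · rintro ⟨hW, hz⟩
    have h := (Finset.sum_eq_zero_iff_of_nonneg (fun i _ => by positivity)).mp hW
    have hx : q.1 = 0 := funext fun i => by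
      have h5 := h i (Finset.mem_univ i)
      have h0 : q.1 i = 0 := by nlinarith [sq_nonneg (q.1 i), sq_nonneg (q.2.1 i)]
      simpa using h0
    have hy : q.2.1 = 0 := funext fun i => by
      have h5 := h i (Finset.mem_univ i)
      have h0 : q.2.1 i = 0 := by nlinarith [sq_nonneg (q.1 i), sq_nonneg (q.2.1 i)]
      simpa using h0
    exact Prod.ext hx (Prod.ext hy hz)
  · rintro rfl
    constructor
    · exact Finset.sum_eq_zero fun i _ => by norm_num
    · rfl

lemma Th_zero (r : ℝ) : Th r (0 : Heis n) = 0 := by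
  have hW : Wh (0 : Heis n) = 0 := Finset.sum_eq_zero fun i _ => by norm_num
  have hz : (0 : Heis n).2.2 = 0 := rfl
  simp [Th, hW, hz]

lemma Th_pos {r : ℝ} (hr : 0 < r) {q : Heis n} (hq : q ≠ 0) : 0 < Th r q := by
  rw [Th]
  apply Real.sqrt_pos.mpr
  apply div_pos _ (by positivity)
  rcases eq_or_lt_of_le (Wh_nonneg q) with hW | hW
  · have hz : q.2.2 ≠ 0 := fun hz => hq ((heis_zero_iff q).mp ⟨hW.symm, hz⟩)
    have : (0:ℝ) < Real.sqrt ((Wh q)^2 + 4*r^2*(q.2.2)^2) := by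
      apply Real.sqrt_pos.mpr
      have : (0:ℝ) < 4*r^2*(q.2.2)^2 := by positivity
      nlinarith [sq_nonneg (Wh q)]
    linarith
  · linarith [Real.sqrt_nonneg ((Wh q)^2 + 4*r^2*(q.2.2)^2)]

lemma root_unique {r : ℝ} (hr : 0 < r) {q : Heis n} {t : ℝ} (ht : 0 < t)
    (h : r^2 * t^4 = Wh q * t^2 + (q.2.2)^2) : t = Th r q := by
  have hT := Th_root hr q
  have hge := Th_sq_ge hr q
  have hTn := Th_nonneg r q
  have key : (t^2 - (Th r q)^2)*(r^2*(t^2 + (Th r q)^2) - Wh q) = 0 := by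
    linear_combination h - hT
  have h2 : t^2 = (Th r q)^2 := by
    rcases mul_eq_zero.mp key with h5 | h5
    · linarith
    · have hrt : (0:ℝ) < r^2*t^2 := by positivity
      nlinarith
  calc t = Real.sqrt (t^2) := (Real.sqrt_sq ht.le).symm
    _ = Real.sqrt ((Th r q)^2) := by rw [h2]
    _ = Th r q := Real.sqrt_sq hTn

lemma le_of_poly {r : ℝ} (hr : 0 < r) {q : Heis n} {t : ℝ} (ht : 0 < t)
    (h : Wh q * t^2 + (q.2.2)^2 ≤ r^2 * t^4) : Th r q ≤ t := by
  by_contra hc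
  push_neg at hc
  have hT := Th_root hr q
  have hge := Th_sq_ge hr q
  have h2 : t^2 < (Th r q)^2 := by nlinarith [Th_nonneg r q]
  have hrt : (0:ℝ) < r^2*t^2 := by positivity
  have h3 : 0 < r^2*((Th r q)^2 + t^2) - Wh q := by nlinarith
  have h4 : 0 < ((Th r q)^2 - t^2) * (r^2*((Th r q)^2 + t^2) - Wh q) :=
    mul_pos (by linarith) h3
  nlinarith [h4]

lemma eNormH_dil {t : ℝ} (ht : t ≠ 0) (q : Heis n) :
    eNormH (hDil (1/t) q) = Real.sqrt (Wh q / t^2 + (q.2.2)^2 / t^4) := by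
  rw [eNormH, hDil]
  congr 1
  have e1 : ∑ i, (((1/t) • q.1) i)^2 = (∑ i, (q.1 i)^2) / t^2 := by
    rw [Finset.sum_div]
    exact Finset.sum_congr rfl fun i _ => by
      simp only [Pi.smul_apply, smul_eq_mul]; field_simp
  have e2 : ∑ i, (((1/t) • q.2.1) i)^2 = (∑ i, (q.2.1 i)^2) / t^2 := by
    rw [Finset.sum_div]
    exact Finset.sum_congr rfl fun i _ => by
      simp only [Pi.smul_apply, smul_eq_mul]; field_simp
  have e3 : Wh q = (∑ i, (q.1 i)^2) + (∑ i, (q.2.1 i)^2) := by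
    rw [Wh, Finset.sum_add_distrib]
  rw [e1, e2, e3]
  field_simp

lemma mem_iff {r : ℝ} (hr : 0 < r) (q : Heis n) (t : ℝ) :
    (0 < t ∧ eNormH (hDil (1/t) q) < r) ↔ Th r q < t := by
  constructor
  · rintro ⟨ht, hN⟩
    rw [eNormH_dil ht.ne' q, Real.sqrt_lt' hr] at hN
    have hpoly : Wh q * t^2 + (q.2.2)^2 < r^2 * t^4 := by
      have h4 : (0:ℝ) < t^4 := by positivity
      have := mul_lt_mul_of_pos_right hN h4
      calc Wh q * t^2 + (q.2.2)^2 = (Wh q / t^2 + (q.2.2)^2 / t^4) * t^4 := by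
            field_simp
        _ < r^2 * t^4 := this
    by_contra hc
    push_neg at hc
    have hT := Th_root hr q
    have hge := Th_sq_ge hr q
    have h2 : t^2 ≤ (Th r q)^2 := by nlinarith [Th_nonneg r q, sq_nonneg t]
    have hrt : (0:ℝ) < r^2*t^2 := by positivity
    have h3 : 0 < r^2*((Th r q)^2 + t^2) - Wh q := by nlinarith
    have h4 : 0 ≤ ((Th r q)^2 - t^2) * (r^2*((Th r q)^2 + t^2) - Wh q) :=
      mul_nonneg (by linarith) h3.le
    nlinarith [h4]
  · intro hlt
    have hTn := Th_nonneg r q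
    have ht : 0 < t := lt_of_le_of_lt hTn hlt
    refine ⟨ht, ?_⟩
    rw [eNormH_dil ht.ne' q, Real.sqrt_lt' hr]
    have hT := Th_root hr q
    have hge := Th_sq_ge hr q
    have h2 : (Th r q)^2 < t^2 := by nlinarith
    have hpoly : Wh q * t^2 + (q.2.2)^2 < r^2 * t^4 := by
      have hrt : (0:ℝ) < r^2*t^2 := by positivity
      have h3 : 0 < r^2*((Th r q)^2 + t^2) - Wh q := by nlinarith
      have h4 : 0 < (t^2 - (Th r q)^2) * (r^2*((Th r q)^2 + t^2) - Wh q) :=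
        mul_pos (by linarith) h3
      nlinarith [h4]
    have h4 : (0:ℝ) < t^4 := by positivity
    rw [div_add_div _ _ (by positivity : (t:ℝ)^2 ≠ 0) (by positivity : (t:ℝ)^4 ≠ 0)]
    rw [div_lt_iff₀ (by positivity)]
    nlinarith [hpoly, sq_nonneg t]

lemma NHS_eq {r : ℝ} (hr : 0 < r) (q : Heis n) : NHS r q = Th r q := by
  have hset : {t : ℝ | 0 < t ∧ eNormH (hDil (1/t) q) < r} = Ioi (Th r q) := by
    ext t; exact (mem_iff hr q t)
  rw [NHS, hset, csInf_Ioi]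

lemma hMul_zero_left (q : Heis n) : hMul 0 q = q := by
  refine Prod.ext (by simp [hMul]) (Prod.ext (by simp [hMul]) ?_)
  show (0:ℝ) + q.2.2 + 2 * ∑ i, (q.1 i * (0:Fin n → ℝ) i - (0:Fin n → ℝ) i * q.2.1 i) = q.2.2
  simp

lemma hMul_zero_right (q : Heis n) : hMul q 0 = q := by
  refine Prod.ext (by simp [hMul]) (Prod.ext (by simp [hMul]) ?_)
  show q.2.2 + (0:ℝ) + 2 * ∑ i, ((0:Fin n → ℝ) i * q.2.1 i - q.1 i * (0:Fin n → ℝ) i) = q.2.2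
  simp

lemma Wh_inv (q : Heis n) : Wh (hInv q) = Wh q := by
  refine Finset.sum_congr rfl fun i _ => ?_
  simp [hInv]

lemma Th_inv (r : ℝ) (q : Heis n) : Th r (hInv q) = Th r q := by
  have e2 : ((hInv q).2.2)^2 = (q.2.2)^2 := by simp [hInv]
  rw [Th, Th, Wh_inv, e2]

lemma Wh_dil (lam : ℝ) (q : Heis n) : Wh (hDil lam q) = lam^2 * Wh q := by
  rw [Wh, Wh, Finset.mul_sum]
  refine Finset.sum_congr rfl fun i _ => ?_
  simp only [hDil, Pi.smul_apply, smul_eq_mul]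
  ring

lemma hDil_zero (lam : ℝ) : hDil lam (0 : Heis n) = 0 := by
  refine Prod.ext (by simp [hDil]) (Prod.ext (by simp [hDil]) ?_)
  show lam^2 * (0:ℝ) = 0
  simp

lemma Th_dil {r : ℝ} (hr : 0 < r) {lam : ℝ} (hlam : 0 < lam) (q : Heis n) :
    Th r (hDil lam q) = lam * Th r q := by
  by_cases hq : q = 0
  · subst hq; rw [hDil_zero, Th_zero, mul_zero]
  · have hT := Th_pos hr hq
    refine (root_unique hr (by positivity) ?_).symm
    rw [Wh_dil]
    have hz : (hDil lam q).2.2 = lam^2 * q.2.2 := rfl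
    rw [hz]
    linear_combination (lam^4) * (Th_root hr q)

lemma scale_id (W z s r2 : ℝ) (hs : s ≠ 0) (h : r2 * s^4 = W * s^2 + z^2) :
    W/s^2 + (z/s^2)^2 = r2 := by
  have key : W/s^2 + (z/s^2)^2 = (W*s^2 + z^2)/s^4 := by
    field_simp
  rw [key, ← h, mul_div_assoc, div_self (pow_ne_zero 4 hs), mul_one]

/-- Triangle inequality for `Th`. -/
lemma Th_tri {r : ℝ} (hr : 0 < r) (hr2 : r^2 < 1/2) (p q : Heis n) :
    Th r (hMul p q) ≤ Th r p + Th r q := by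
  by_cases hp : p = 0
  · subst hp; rw [hMul_zero_left, Th_zero]; linarith [Th_nonneg r q]
  by_cases hq : q = 0
  · subst hq; rw [hMul_zero_right, Th_zero]; linarith [Th_nonneg r p]
  set s := Th r p with hs
  set t := Th r q with ht
  have hs0 : 0 < s := Th_pos hr hp
  have ht0 : 0 < t := Th_pos hr hq
  have hu0 : 0 < s + t := by linarith
  apply le_of_poly hr hu0
  rw [Wh_mul, z_mul]
  set u := s + t with hu
  have hsne : s ≠ 0 := hs0.ne'
  have htne : t ≠ 0 := ht0.ne'
  have hune : u ≠ 0 := hu0.ne'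
  have hA : Wh p / s^2 + (p.2.2/s^2)^2 = r^2 := by
    have h := Th_root hr p
    rw [← hs] at h
    exact scale_id _ _ _ _ hsne h
  have hB : Wh q / t^2 + (q.2.2/t^2)^2 = r^2 := by
    have h := Th_root hr q
    rw [← ht] at h
    exact scale_id _ _ _ _ htne h
  have hcs : (iph p q/(s*t))^2 + (omh p q/(s*t))^2 ≤ (Wh p/s^2)*(Wh q/t^2) := by
    have h := cs_complex p q
    have e : (Wh p/s^2)*(Wh q/t^2) = (Wh p * Wh q)/((s*t)^2) := by
      rw [div_mul_div_comm, mul_pow]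
    rw [e, div_pow, div_pow, ← add_div]
    exact div_le_div_of_nonneg_right h (by positivity)
  have hcore := core_le r (s/u) (t/u) (Wh p/s^2) (Wh q/t^2) (p.2.2/s^2) (q.2.2/t^2)
    (iph p q/(s*t)) (omh p q/(s*t)) (by positivity) (by positivity)
    (by rw [← add_div, ← hu, div_self hune]) hr2 hA hB (div_nonneg (Wh_nonneg p) (by positivity))
    (div_nonneg (Wh_nonneg q) (by positivity)) hcs
  have E1 : (s/u)^2*(Wh p/s^2) = Wh p/u^2 := by
    field_simp
    try ring
  have E2 : (t/u)^2*(Wh q/t^2) = Wh q/u^2 := by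
    field_simp
    try ring
  have E3 : 2*(s/u)*(t/u)*(iph p q/(s*t)) = 2*iph p q/u^2 := by
    field_simp
    try ring
  have E4 : (s/u)^2*(p.2.2/s^2) + (t/u)^2*(q.2.2/t^2) + 2*(s/u)*(t/u)*(omh p q/(s*t))
      = (p.2.2 + q.2.2 + 2*omh p q)/u^2 := by
    field_simp
    try ring
  rw [E1, E2, E3, E4] at hcore
  have hu4 : (0:ℝ) < u^4 := by positivity
  have hfin := mul_le_mul_of_nonneg_right hcore hu4.le
  calc (Wh p + Wh q + 2 * iph p q) * u^2 + (p.2.2 + q.2.2 + 2 * omh p q)^2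
      = (Wh p/u^2 + Wh q/u^2 + 2*iph p q/u^2 + ((p.2.2 + q.2.2 + 2*omh p q)/u^2)^2) * u^4 := by
        field_simp
        try ring
    _ ≤ r^2 * u^4 := hfin


lemma hMul_horiz (w : (Fin n → ℝ) × (Fin n → ℝ)) (a b : ℝ) :
    hMul (a • w.1, a • w.2, (0:ℝ)) (b • w.1, b • w.2, (0:ℝ))
      = ((a+b) • w.1, (a+b) • w.2, (0:ℝ)) := by
  refine Prod.ext ?_ (Prod.ext ?_ ?_)
  · show a • w.1 + b • w.1 = (a+b) • w.1
    rw [add_smul]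
  · show a • w.2 + b • w.2 = (a+b) • w.2
    rw [add_smul]
  · show (0:ℝ) + 0 + 2 * ∑ i, ((b • w.1) i * (a • w.2) i - (a • w.1) i * (b • w.2) i) = 0
    have h : ∀ i ∈ Finset.univ, ((b • w.1) i * (a • w.2) i - (a • w.1) i * (b • w.2) i) = 0 := by
      intro i _
      simp only [Pi.smul_apply, smul_eq_mul]
      ring
    rw [Finset.sum_congr rfl h]
    simp

lemma Wh_horiz (w : (Fin n → ℝ) × (Fin n → ℝ)) (c : ℝ) :
    Wh (c • w.1, c • w.2, (0:ℝ)) = c^2 * Wh (w.1, w.2, (0:ℝ)) := by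
  rw [Wh, Wh, Finset.mul_sum]
  refine Finset.sum_congr rfl fun i _ => ?_
  simp only [Pi.smul_apply, smul_eq_mul]
  ring

lemma horiz_ne_zero (w : (Fin n → ℝ) × (Fin n → ℝ)) (c : ℝ)
    (h : ((c • w.1, c • w.2, (0:ℝ)) : Heis n) ≠ 0) : 0 < Wh ((w.1, w.2, (0:ℝ)) : Heis n) := by
  rcases eq_or_lt_of_le (Finset.sum_nonneg (fun i _ => by positivity) :
      (0:ℝ) ≤ Wh ((w.1, w.2, (0:ℝ)) : Heis n)) with hW | hW
  · exfalso
    apply h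
    have h0 := (Finset.sum_eq_zero_iff_of_nonneg (fun i _ => by positivity)).mp hW.symm
    have hx : w.1 = 0 := funext fun i => by
      have h5 := h0 i (Finset.mem_univ i)
      have : w.1 i = 0 := by nlinarith [sq_nonneg (w.1 i), sq_nonneg (w.2 i)]
      simpa using this
    have hy : w.2 = 0 := funext fun i => by
      have h5 := h0 i (Finset.mem_univ i)
      have : w.2 i = 0 := by nlinarith [sq_nonneg (w.1 i), sq_nonneg (w.2 i)]
      simpa using this
    rw [hx, hy, smul_zero]
    rfl
  · exact hW

lemma parallel (p q : Heis n) (h : (iph p q)^2 = Wh p * Wh q) (hW : 0 < Wh p) :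
    q.1 = (iph p q / Wh p) • p.1 ∧ q.2.1 = (iph p q / Wh p) • p.2.1 := by
  set c := iph p q with hc
  have hD : ∑ i, ((Wh p * q.1 i - c * p.1 i)^2 + (Wh p * q.2.1 i - c * p.2.1 i)^2)
      = (Wh p)^2 * Wh q + ((-(2 * Wh p * c)) * iph p q + c^2 * Wh p) := by
    have h1 : ∀ i ∈ Finset.univ,
        ((Wh p * q.1 i - c * p.1 i)^2 + (Wh p * q.2.1 i - c * p.2.1 i)^2)
        = ((Wh p)^2 * (q.1 i^2 + q.2.1 i^2)
          + ((-(2 * Wh p * c)) * (p.1 i * q.1 i + p.2.1 i * q.2.1 i)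
            + c^2 * (p.1 i^2 + p.2.1 i^2))) := by
      intro i _; ring
    rw [Finset.sum_congr rfl h1]
    unfold Wh iph
    simp only [mul_add, Finset.sum_add_distrib, ← Finset.mul_sum]
    try ring
  have hD0 : ∑ i, ((Wh p * q.1 i - c * p.1 i)^2 + (Wh p * q.2.1 i - c * p.2.1 i)^2) = 0 := by
    rw [hD, ← hc]
    nlinarith [h]
  have hall := (Finset.sum_eq_zero_iff_of_nonneg (fun i _ => by positivity)).mp hD0
  constructor
  · funext i
    have h5 := hall i (Finset.mem_univ i)
    have h6 : Wh p * q.1 i - c * p.1 i = 0 := by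
      nlinarith [sq_nonneg (Wh p * q.1 i - c * p.1 i), sq_nonneg (Wh p * q.2.1 i - c * p.2.1 i)]
    have : q.1 i = (c / Wh p) * p.1 i := by
      field_simp
      linarith
    simpa using this
  · funext i
    have h5 := hall i (Finset.mem_univ i)
    have h6 : Wh p * q.2.1 i - c * p.2.1 i = 0 := by
      nlinarith [sq_nonneg (Wh p * q.1 i - c * p.1 i), sq_nonneg (Wh p * q.2.1 i - c * p.2.1 i)]
    have : q.2.1 i = (c / Wh p) * p.2.1 i := by
      field_simp
      linarith
    simpa using this

lemma Th_horiz {r : ℝ} (hr : 0 < r) (w : (Fin n → ℝ) × (Fin n → ℝ)) {c : ℝ} (hc : 0 < c)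
    (hW : 0 < Wh ((w.1, w.2, (0:ℝ)) : Heis n)) :
    Th r ((c • w.1, c • w.2, (0:ℝ)) : Heis n)
      = c * Real.sqrt (Wh ((w.1, w.2, (0:ℝ)) : Heis n)) / r := by
  set W0 := Wh ((w.1, w.2, (0:ℝ)) : Heis n) with hW0
  have hsq : Real.sqrt W0 ^ 2 = W0 := Real.sq_sqrt hW.le
  have hs0 : 0 < Real.sqrt W0 := Real.sqrt_pos.mpr hW
  refine (root_unique hr (by positivity) ?_).symm
  rw [Wh_horiz, ← hW0]
  have hz : ((c • w.1, c • w.2, (0:ℝ)) : Heis n).2.2 = 0 := rfl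
  rw [hz]
  have ht2 : (c * Real.sqrt W0 / r)^2 = c^2 * W0 / r^2 := by
    rw [div_pow, mul_pow, hsq]
  have e4 : (c * Real.sqrt W0 / r)^4 = ((c * Real.sqrt W0 / r)^2)^2 := by ring
  rw [e4, ht2]
  field_simp
  try ring

lemma Th_eq_iff {r : ℝ} (hr : 0 < r) (hr2 : r^2 < 1/2) (q₁ q₂ : Heis n)
    (h1 : q₁ ≠ 0) (h2 : q₂ ≠ 0) :
    Th r (hMul q₁ q₂) = Th r q₁ + Th r q₂ ↔
      ∃ (w : (Fin n → ℝ) × (Fin n → ℝ)) (s₁ s₂ : ℝ), 0 < s₁ ∧ 0 < s₂ ∧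
        q₁ = (s₁ • w.1, s₁ • w.2, 0) ∧ q₂ = (s₂ • w.1, s₂ • w.2, 0) := by
  constructor
  · intro heq
    set s := Th r q₁ with hs
    set t := Th r q₂ with ht
    have hs0 : 0 < s := Th_pos hr h1
    have ht0 : 0 < t := Th_pos hr h2
    have hu0 : 0 < s + t := by linarith
    have hsne : s ≠ 0 := hs0.ne'
    have htne : t ≠ 0 := ht0.ne'
    have hune : s + t ≠ 0 := hu0.ne'
    have hroot := Th_root hr (hMul q₁ q₂)
    rw [heq, Wh_mul, z_mul] at hroot
    have hscaled := scale_id _ _ _ (r^2) hune hroot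
    have hA : Wh q₁ / s^2 + (q₁.2.2/s^2)^2 = r^2 := by
      have h := Th_root hr q₁
      rw [← hs] at h
      exact scale_id _ _ _ _ hsne h
    have hB : Wh q₂ / t^2 + (q₂.2.2/t^2)^2 = r^2 := by
      have h := Th_root hr q₂
      rw [← ht] at h
      exact scale_id _ _ _ _ htne h
    have hcs : (iph q₁ q₂/(s*t))^2 + (omh q₁ q₂/(s*t))^2 ≤ (Wh q₁/s^2)*(Wh q₂/t^2) := by
      have h := cs_complex q₁ q₂
      have e : (Wh q₁/s^2)*(Wh q₂/t^2) = (Wh q₁ * Wh q₂)/((s*t)^2) := by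
        rw [div_mul_div_comm, mul_pow]
      rw [e, div_pow, div_pow, ← add_div]
      exact div_le_div_of_nonneg_right h (by positivity)
    have E1 : (s/(s+t))^2*(Wh q₁/s^2) = Wh q₁/(s+t)^2 := by
      field_simp
      try ring
    have E2 : (t/(s+t))^2*(Wh q₂/t^2) = Wh q₂/(s+t)^2 := by
      field_simp
      try ring
    have E3 : 2*(s/(s+t))*(t/(s+t))*(iph q₁ q₂/(s*t)) = 2*iph q₁ q₂/(s+t)^2 := by
      field_simp
      try ring
    have E4 : (s/(s+t))^2*(q₁.2.2/s^2) + (t/(s+t))^2*(q₂.2.2/t^2)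
        + 2*(s/(s+t))*(t/(s+t))*(omh q₁ q₂/(s*t))
        = (q₁.2.2 + q₂.2.2 + 2*omh q₁ q₂)/(s+t)^2 := by
      field_simp
      try ring
    have heq2 : (s/(s+t))^2*(Wh q₁/s^2) + (t/(s+t))^2*(Wh q₂/t^2)
        + 2*(s/(s+t))*(t/(s+t))*(iph q₁ q₂/(s*t))
        + ((s/(s+t))^2*(q₁.2.2/s^2) + (t/(s+t))^2*(q₂.2.2/t^2)
          + 2*(s/(s+t))*(t/(s+t))*(omh q₁ q₂/(s*t)))^2 = r^2 := by
      rw [E1, E2, E3, E4]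
      linear_combination hscaled
    obtain ⟨hom, hz1, hz2, hA', hB', hip⟩ := core_eq r (s/(s+t)) (t/(s+t))
      (Wh q₁/s^2) (Wh q₂/t^2) (q₁.2.2/s^2) (q₂.2.2/t^2)
      (iph q₁ q₂/(s*t)) (omh q₁ q₂/(s*t)) hr (by positivity) (by positivity)
      (by rw [← add_div, div_self hune]) hr2 hA hB
      (div_nonneg (Wh_nonneg q₁) (by positivity))
      (div_nonneg (Wh_nonneg q₂) (by positivity)) hcs heq2
    have hstne : s*t ≠ 0 := by positivity
    have hom0 : omh q₁ q₂ = 0 := by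
      rcases div_eq_zero_iff.mp hom with h | h
      · exact h
      · exact absurd h hstne
    have hzp : q₁.2.2 = 0 := by
      rcases div_eq_zero_iff.mp hz1 with h | h
      · exact h
      · exact absurd h (pow_ne_zero 2 hsne)
    have hzq : q₂.2.2 = 0 := by
      rcases div_eq_zero_iff.mp hz2 with h | h
      · exact h
      · exact absurd h (pow_ne_zero 2 htne)
    have hWp : Wh q₁ = r^2*s^2 := by
      have := (div_eq_iff (pow_ne_zero 2 hsne)).mp hA'
      linarith
    have hWq : Wh q₂ = r^2*t^2 := by
      have := (div_eq_iff (pow_ne_zero 2 htne)).mp hB'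
      linarith
    have hipv : iph q₁ q₂ = r^2*(s*t) := by
      have := (div_eq_iff hstne).mp hip
      linarith
    have hcseq : (iph q₁ q₂)^2 = Wh q₁ * Wh q₂ := by
      rw [hipv, hWp, hWq]; ring
    have hWppos : 0 < Wh q₁ := by rw [hWp]; positivity
    obtain ⟨e1, e2⟩ := parallel q₁ q₂ hcseq hWppos
    have hcpos : 0 < iph q₁ q₂ / Wh q₁ := div_pos (by rw [hipv]; positivity) hWppos
    refine ⟨(q₁.1, q₁.2.1), 1, iph q₁ q₂ / Wh q₁, one_pos, hcpos, ?_, ?_⟩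
    · refine Prod.ext ?_ (Prod.ext ?_ ?_)
      · show q₁.1 = (1:ℝ) • q₁.1
        rw [one_smul]
      · show q₁.2.1 = (1:ℝ) • q₁.2.1
        rw [one_smul]
      · exact hzp
    · exact Prod.ext e1 (Prod.ext e2 hzq)
  · rintro ⟨w, s₁, s₂, hs₁, hs₂, rfl, rfl⟩
    rw [hMul_horiz]
    have hW0 : 0 < Wh ((w.1, w.2, (0:ℝ)) : Heis n) := horiz_ne_zero w s₁ h1
    rw [Th_horiz hr w hs₁ hW0, Th_horiz hr w hs₂ hW0, Th_horiz hr w (by linarith : (0:ℝ) < s₁ + s₂) hW0]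
    ring

end Aux

theorem stmt13 (n : ℕ) :
    ∃ r₀ : ℝ, 0 < r₀ ∧ ∀ r : ℝ, 0 < r → r < r₀ →
      IsHomNorm (fun q : Heis n => NHS r q) ∧
      IsHSC (fun q : Heis n => NHS r q) ∧
      ∀ q₁ q₂ : Heis n, q₁ ≠ 0 → q₂ ≠ 0 →
        (NHS r (hMul q₁ q₂) = NHS r q₁ + NHS r q₂ ↔
          ∃ (w : (Fin n → ℝ) × (Fin n → ℝ)) (s₁ s₂ : ℝ), 0 < s₁ ∧ 0 < s₂ ∧
            q₁ = (s₁ • w.1, s₁ • w.2, 0) ∧ q₂ = (s₂ • w.1, s₂ • w.2, 0)) := by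
  refine ⟨1/2, one_half_pos, fun r hr hr05 => ?_⟩
  have hr2 : r^2 < 1/2 := by nlinarith
  have hiff : ∀ q₁ q₂ : Heis n, q₁ ≠ 0 → q₂ ≠ 0 →
      (NHS r (hMul q₁ q₂) = NHS r q₁ + NHS r q₂ ↔
        ∃ (w : (Fin n → ℝ) × (Fin n → ℝ)) (s₁ s₂ : ℝ), 0 < s₁ ∧ 0 < s₂ ∧
          q₁ = (s₁ • w.1, s₁ • w.2, 0) ∧ q₂ = (s₂ • w.1, s₂ • w.2, 0)) := by
    intro q₁ q₂ h1 h2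
    rw [NHS_eq hr, NHS_eq hr, NHS_eq hr]
    exact Th_eq_iff hr hr2 q₁ q₂ h1 h2
  refine ⟨⟨fun q => ?_, fun q => ?_, fun q => ?_, fun q q' => ?_, fun lam hlam q => ?_⟩,
    ?_, hiff⟩
  · show 0 ≤ NHS r q
    rw [NHS_eq hr]
    exact Th_nonneg r q
  · show NHS r q = 0 ↔ q = 0
    rw [NHS_eq hr]
    constructor
    · intro h
      by_contra hq
      exact (Th_pos hr hq).ne' h
    · rintro rfl
      exact Th_zero r
  · show NHS r (hInv q) = NHS r q
    rw [NHS_eq hr, NHS_eq hr, Th_inv]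
  · show NHS r (hMul q q') ≤ NHS r q + NHS r q'
    rw [NHS_eq hr, NHS_eq hr, NHS_eq hr]
    exact Th_tri hr hr2 q q'
  · show NHS r (hDil lam q) = lam * NHS r q
    rw [NHS_eq hr, NHS_eq hr, Th_dil hr hlam]
  · intro q q' hq hq' heq
    obtain ⟨w, s₁, s₂, _, _, e1, e2⟩ := (hiff q q' hq hq').mp heq
    exact ⟨w, s₁, s₂, e1, e2⟩
end
end

section
/- Fix n ∈ ℕ, 1 ≤ p ≤ ∞ and 0 < a ≤ n^{−1/2}, and define N_{p,a}: ℍⁿ → [0,∞) by N_{p,a}(x,y,z) = max{ ‖(x,y)‖_p , a·√|z| }, where ‖·‖_p is the ℓ^p norm on ℝ^{2n}. Then N_{p,a} is not horizontally strictly convex: for any z with 0 < |z| ≤ 1/a², the points q = (e₁, 0, z) and q' = (e₁, 0, −z) (e₁ the first standard basis vector of ℝⁿ) satisfy N_{p,a}(q·q') = 2 = N_{p,a}(q) + N_{p,a}(q'), yet there exist no w ∈ ℝ^{2n} and s, s' ∈ ℝ with q = ((s w), 0) and q' = ((s' w), 0). -/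
open MeasureTheory Set
open scoped ENNReal

noncomputable section

/-- The `ℓᵖ` norm of `(x,y) ∈ ℝ^{2n}`, `1 ≤ p ≤ ∞`. -/
noncomputable def lp2n (n : ℕ) (p : ℝ≥0∞) [Fact (1 ≤ p)] (x y : Fin n → ℝ) : ℝ :=
  ‖(WithLp.equiv p (Fin n ⊕ Fin n → ℝ)).symm (Sum.elim x y)‖

/-- The norm `N_{p,a}(x,y,z) = max (‖(x,y)‖_p, a √|z|)` on `ℍⁿ`. -/
noncomputable def Npa (n : ℕ) (p : ℝ≥0∞) [Fact (1 ≤ p)] (a : ℝ)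
    (q : Heis n) : ℝ :=
  max (lp2n n p q.1 q.2.1) (a * Real.sqrt |q.2.2|)


lemma lp2n_single (n : ℕ) (p : ℝ≥0∞) [Fact (1 ≤ p)] (hn : 0 < n) (c : ℝ) :
    lp2n n p (fun i => if (i : ℕ) = 0 then c else 0) 0 = |c| := by
  have h : (Sum.elim (fun i : Fin n => if (i : ℕ) = 0 then c else 0) (0 : Fin n → ℝ))
      = Pi.single (Sum.inl ⟨0, hn⟩ : Fin n ⊕ Fin n) c := by
    funext x
    rcases x with i | i
    · rcases eq_or_ne i ⟨0, hn⟩ with rfl | hi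
      · simp
      · have h0 : (i : ℕ) ≠ 0 := fun h0 => hi (Fin.ext h0)
        rw [Pi.single_eq_of_ne (by simpa using hi)]
        simp [h0]
    · simp [Pi.single_eq_of_ne (by simp : (Sum.inr i : Fin n ⊕ Fin n) ≠ Sum.inl ⟨0, hn⟩)]
  rw [lp2n, h]
  change ‖WithLp.toLp p _‖ = _
  rw [PiLp.norm_toLp_single, Real.norm_eq_abs]

theorem stmt14 (n : ℕ) (p : ℝ≥0∞) [Fact (1 ≤ p)] (a : ℝ)
    (ha : 0 < a) (ha' : a ≤ (n : ℝ) ^ (-(1 : ℝ) / 2)) :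
    ∀ z : ℝ, 0 < |z| → |z| ≤ 1 / a ^ 2 →
      Npa n p a
          (hMul ((fun i => if (i : ℕ) = 0 then (1 : ℝ) else 0), 0, z)
                ((fun i => if (i : ℕ) = 0 then (1 : ℝ) else 0), 0, -z)) = 2 ∧
      Npa n p a ((fun i => if (i : ℕ) = 0 then (1 : ℝ) else 0), 0, z)
        + Npa n p a ((fun i => if (i : ℕ) = 0 then (1 : ℝ) else 0), 0, -z) = 2 ∧
      ¬ ∃ (w : (Fin n → ℝ) × (Fin n → ℝ)) (s s' : ℝ),
          (((fun i => if (i : ℕ) = 0 then (1 : ℝ) else 0), 0, z) : Heis n)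
              = (s • w.1, s • w.2, 0) ∧
          (((fun i => if (i : ℕ) = 0 then (1 : ℝ) else 0), 0, -z) : Heis n)
              = (s' • w.1, s' • w.2, 0) := by
  have hn : 0 < n := by
    by_contra h
    push_neg at h
    interval_cases n
    rw [Nat.cast_zero, Real.zero_rpow (by norm_num)] at ha'
    exact absurd (ha.trans_le ha') (lt_irrefl 0)
  intro z hz hz1
  have key : ∀ c : ℝ, lp2n n p (fun i => if (i : ℕ) = 0 then c else 0) 0 = |c| :=
    lp2n_single n p hn
  have hsq : a * Real.sqrt |z| ≤ 1 := by
    have h1 : Real.sqrt |z| ≤ 1 / a := by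
      rw [show (1 : ℝ) / a = Real.sqrt (1 / a ^ 2) by
        rw [one_div, one_div, Real.sqrt_inv, Real.sqrt_sq ha.le]]
      exact Real.sqrt_le_sqrt hz1
    calc a * Real.sqrt |z| ≤ a * (1 / a) := by nlinarith [abs_nonneg z]
      _ = 1 := by field_simp
  refine ⟨?_, ?_, ?_⟩
  · have hmul : hMul ((fun i => if (i : ℕ) = 0 then (1 : ℝ) else 0), 0, z)
        ((fun i => if (i : ℕ) = 0 then (1 : ℝ) else 0), 0, -z)
        = (((fun i => if (i : ℕ) = 0 then (2 : ℝ) else 0) : Fin n → ℝ), (0 : Fin n → ℝ), (0 : ℝ)) := by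
      simp only [hMul, Prod.mk.injEq]
      refine ⟨?_, by simp, by simp⟩
      funext i
      by_cases hi : (i : ℕ) = 0 <;> simp [hi, Pi.add_apply]
      norm_num
    rw [hmul, Npa]
    simp only [key]
    norm_num
  · rw [Npa, Npa]
    simp only [key]
    simp only [abs_one, abs_neg]
    rw [max_eq_left hsq]
    norm_num
  · rintro ⟨w, s, s', h1, h2⟩
    have : z = 0 := congrArg (fun q : Heis n => q.2.2) h1
    rw [this, abs_zero] at hz
    exact lt_irrefl 0 hz
end
end

section
/- Let V and W be real inner product spaces, let t ∈ (0,1), C₁ > 0, and let x₁, x₂ ∈ V be nonzero vectors. Let v ∈ W satisfy ‖v‖ ≤ C₁·‖x₁‖·‖x₂‖·‖ x₁/‖x₁‖ − x₂/‖x₂‖ ‖, and assume (1 + t(1−t))·C₁²·‖x₁‖·‖x₂‖ ≤ 1. Then ‖t·x₁ + (1−t)·x₂‖² + t(1−t)(1 + t(1−t))·‖v‖² ≤ (t‖x₁‖ + (1−t)‖x₂‖)². -/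
open scoped RealInnerProductSpace


theorem stmt17 {V W : Type*} [NormedAddCommGroup V] [InnerProductSpace ℝ V]
    [NormedAddCommGroup W] [InnerProductSpace ℝ W]
    (t C₁ : ℝ) (ht : t ∈ Set.Ioo (0 : ℝ) 1) (hC₁ : 0 < C₁)
    (x₁ x₂ : V) (hx₁ : x₁ ≠ 0) (hx₂ : x₂ ≠ 0) (v : W)
    (hv : ‖v‖ ≤ C₁ * ‖x₁‖ * ‖x₂‖ * ‖‖x₁‖⁻¹ • x₁ - ‖x₂‖⁻¹ • x₂‖)
    (hsmall : (1 + t * (1 - t)) * C₁ ^ 2 * ‖x₁‖ * ‖x₂‖ ≤ 1) :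
    ‖t • x₁ + (1 - t) • x₂‖ ^ 2 + t * (1 - t) * (1 + t * (1 - t)) * ‖v‖ ^ 2
      ≤ (t * ‖x₁‖ + (1 - t) * ‖x₂‖) ^ 2 := by
  obtain ⟨ht0, ht1⟩ := ht
  have ht1' : (0:ℝ) < 1 - t := by linarith
  have hn1 : (0:ℝ) < ‖x₁‖ := norm_pos_iff.mpr hx₁
  have hn2 : (0:ℝ) < ‖x₂‖ := norm_pos_iff.mpr hx₂
  have hcs : (inner ℝ x₁ x₂ : ℝ) ≤ ‖x₁‖ * ‖x₂‖ := real_inner_le_norm x₁ x₂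
  have h1 : ‖t • x₁ + (1 - t) • x₂‖ ^ 2
      = t^2 * ‖x₁‖^2 + 2 * (t*(1-t)) * (inner ℝ x₁ x₂ : ℝ) + (1-t)^2 * ‖x₂‖^2 := by
    rw [@norm_add_sq_real, norm_smul, norm_smul, real_inner_smul_left,
      real_inner_smul_right]
    simp only [Real.norm_eq_abs, abs_of_pos ht0, abs_of_pos ht1']
    ring
  have h2 : ‖‖x₁‖⁻¹ • x₁ - ‖x₂‖⁻¹ • x₂‖ ^ 2
      = 2 - 2 * (inner ℝ x₁ x₂ : ℝ) / (‖x₁‖ * ‖x₂‖) := by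
    rw [@norm_sub_sq_real, norm_smul, norm_smul, real_inner_smul_left,
      real_inner_smul_right]
    simp only [norm_inv, norm_norm]
    field_simp
    ring
  have hvsq : ‖v‖^2 ≤ 2 * C₁^2 * ‖x₁‖ * ‖x₂‖ * (‖x₁‖ * ‖x₂‖ - (inner ℝ x₁ x₂ : ℝ)) := by
    have h3 : ‖v‖^2 ≤ (C₁ * ‖x₁‖ * ‖x₂‖)^2 * ‖‖x₁‖⁻¹ • x₁ - ‖x₂‖⁻¹ • x₂‖^2 := by
      have := pow_le_pow_left₀ (norm_nonneg v) hv 2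
      calc ‖v‖^2 ≤ (C₁ * ‖x₁‖ * ‖x₂‖ * ‖‖x₁‖⁻¹ • x₁ - ‖x₂‖⁻¹ • x₂‖)^2 := this
        _ = _ := by ring
    rw [h2] at h3
    have heq : (C₁ * ‖x₁‖ * ‖x₂‖)^2 * (2 - 2 * (inner ℝ x₁ x₂ : ℝ) / (‖x₁‖ * ‖x₂‖))
        = 2 * C₁^2 * ‖x₁‖ * ‖x₂‖ * (‖x₁‖ * ‖x₂‖ - (inner ℝ x₁ x₂ : ℝ)) := by
      field_simp
    linarith [heq ▸ h3]
  rw [h1]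
  nlinarith [mul_pos ht0 ht1', mul_pos hn1 hn2, sq_nonneg (‖x₁‖ * ‖x₂‖ - (inner ℝ x₁ x₂ : ℝ)),
    mul_le_mul_of_nonneg_right hsmall (by linarith : (0:ℝ) ≤ ‖x₁‖ * ‖x₂‖ - (inner ℝ x₁ x₂ : ℝ)),
    mul_le_mul_of_nonneg_left hvsq (le_of_lt (mul_pos (mul_pos ht0 ht1') (by nlinarith : (0:ℝ) < 1 + t*(1-t))))]
end

section
/- Let V and W be real inner product spaces, let t ∈ (0,1), C₁ > 0, and let x₁, x₂ ∈ V be nonzero vectors with (1 + t(1−t))·C₁²·‖x₁‖·‖x₂‖ < 1, and let v ∈ W satisfy ‖v‖ ≤ C₁·‖x₁‖·‖x₂‖·‖ x₁/‖x₁‖ − x₂/‖x₂‖ ‖. If equality ‖t·x₁ + (1−t)·x₂‖² + t(1−t)(1 + t(1−t))·‖v‖² = (t‖x₁‖ + (1−t)‖x₂‖)² holds, then x₁/‖x₁‖ = x₂/‖x₂‖ and v = 0; if in addition (t‖x₁‖ + (1−t)‖x₂‖)² = t‖x₁‖² + (1−t)‖x₂‖², then x₁ = x₂. -/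
theorem stmt18 {V W : Type*} [NormedAddCommGroup V] [InnerProductSpace ℝ V]
    [NormedAddCommGroup W] [InnerProductSpace ℝ W]
    (t C₁ : ℝ) (ht : t ∈ Set.Ioo (0 : ℝ) 1) (hC₁ : 0 < C₁)
    (x₁ x₂ : V) (hx₁ : x₁ ≠ 0) (hx₂ : x₂ ≠ 0)
    (hsmall : (1 + t * (1 - t)) * C₁ ^ 2 * ‖x₁‖ * ‖x₂‖ < 1) (v : W)
    (hv : ‖v‖ ≤ C₁ * ‖x₁‖ * ‖x₂‖ * ‖‖x₁‖⁻¹ • x₁ - ‖x₂‖⁻¹ • x₂‖)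
    (heq : ‖t • x₁ + (1 - t) • x₂‖ ^ 2
        + t * (1 - t) * (1 + t * (1 - t)) * ‖v‖ ^ 2
      = (t * ‖x₁‖ + (1 - t) * ‖x₂‖) ^ 2) :
    (‖x₁‖⁻¹ • x₁ = ‖x₂‖⁻¹ • x₂ ∧ v = 0) ∧
    ((t * ‖x₁‖ + (1 - t) * ‖x₂‖) ^ 2 = t * ‖x₁‖ ^ 2 + (1 - t) * ‖x₂‖ ^ 2 →
      x₁ = x₂) := by
  obtain ⟨ht0, ht1⟩ := ht
  have ht1' : 0 < 1 - t := by linarith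
  have ha : (0:ℝ) < ‖x₁‖ := norm_pos_iff.mpr hx₁
  have hb : (0:ℝ) < ‖x₂‖ := norm_pos_iff.mpr hx₂
  have hDnn : (0:ℝ) ≤ ‖‖x₁‖⁻¹ • x₁ - ‖x₂‖⁻¹ • x₂‖ := norm_nonneg _
  -- expand norms
  have hexp : ‖t • x₁ + (1 - t) • x₂‖ ^ 2
      = t ^ 2 * ‖x₁‖ ^ 2 + 2 * (t * (1 - t)) * inner ℝ x₁ x₂ + (1 - t) ^ 2 * ‖x₂‖ ^ 2 := by
    rw [norm_add_sq_real, real_inner_smul_left, real_inner_smul_right,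
      norm_smul, norm_smul]
    rw [Real.norm_of_nonneg ht0.le, Real.norm_of_nonneg ht1'.le]
    ring
  have hD2 : ‖x₁‖ * ‖x₂‖ * ‖‖x₁‖⁻¹ • x₁ - ‖x₂‖⁻¹ • x₂‖ ^ 2
      = 2 * (‖x₁‖ * ‖x₂‖) - 2 * inner ℝ x₁ x₂ := by
    rw [norm_sub_sq_real, real_inner_smul_left, real_inner_smul_right,
      norm_smul, norm_smul]
    rw [Real.norm_of_nonneg (inv_nonneg.mpr ha.le),
      Real.norm_of_nonneg (inv_nonneg.mpr hb.le)]
    field_simp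
    ring
  -- key equation
  have hkey : (1 + t * (1 - t)) * ‖v‖ ^ 2
      = ‖x₁‖ * ‖x₂‖ * ‖‖x₁‖⁻¹ • x₁ - ‖x₂‖⁻¹ • x₂‖ ^ 2 := by
    have htt : 0 < t * (1 - t) := mul_pos ht0 ht1'
    rw [hexp] at heq
    have : t * (1 - t) * ((1 + t * (1 - t)) * ‖v‖ ^ 2)
        = t * (1 - t) * (2 * (‖x₁‖ * ‖x₂‖) - 2 * inner ℝ x₁ x₂) := by nlinarith [heq]
    have := mul_left_cancel₀ (ne_of_gt htt) this
    rw [this, hD2]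
  have hD0 : ‖‖x₁‖⁻¹ • x₁ - ‖x₂‖⁻¹ • x₂‖ = 0 := by
    by_contra hne
    have hDpos : 0 < ‖‖x₁‖⁻¹ • x₁ - ‖x₂‖⁻¹ • x₂‖ := lt_of_le_of_ne hDnn (Ne.symm hne)
    have hv2 : ‖v‖ ^ 2 ≤ (C₁ * ‖x₁‖ * ‖x₂‖ * ‖‖x₁‖⁻¹ • x₁ - ‖x₂‖⁻¹ • x₂‖) ^ 2 :=
      pow_le_pow_left₀ (norm_nonneg v) hv 2
    nlinarith [sq_nonneg (‖‖x₁‖⁻¹ • x₁ - ‖x₂‖⁻¹ • x₂‖), mul_pos ht0 ht1',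
      mul_pos (mul_pos ha hb) (pow_pos hDpos 2)]
  have hunit : ‖x₁‖⁻¹ • x₁ = ‖x₂‖⁻¹ • x₂ := by
    rwa [norm_eq_zero, sub_eq_zero] at hD0
  have hv0 : v = 0 := by
    have : (1 + t * (1 - t)) * ‖v‖ ^ 2 = 0 := by rw [hkey, hD0]; ring
    have h1 : 0 < 1 + t * (1 - t) := by nlinarith
    have : ‖v‖ ^ 2 = 0 := by
      rcases mul_eq_zero.mp this with h | h
      · exact absurd h (ne_of_gt h1)
      · exact h
    exact norm_eq_zero.mp (pow_eq_zero_iff two_ne_zero |>.mp this)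
  refine ⟨⟨hunit, hv0⟩, fun h2 => ?_⟩
  have h3 : t * (1 - t) * (‖x₁‖ - ‖x₂‖) ^ 2 = 0 := by linear_combination -h2
  have h4 : (‖x₁‖ - ‖x₂‖) ^ 2 = 0 :=
    (mul_eq_zero.mp h3).resolve_left (mul_pos ht0 ht1').ne'
  have hab : ‖x₁‖ = ‖x₂‖ := by
    have := pow_eq_zero_iff two_ne_zero |>.mp h4
    linarith
  have : x₁ = ‖x₁‖ • (‖x₁‖⁻¹ • x₁) := by
    rw [smul_smul, mul_inv_cancel₀ (ne_of_gt ha), one_smul]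
  rw [this, hunit, hab, smul_smul, mul_inv_cancel₀ (ne_of_gt hb), one_smul]
end
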